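/- arXiv:2308.14919 — 3 statements merged into one kernel-verified Lean document; each statement's English description precedes it below -/
import Mathlib

section
/- Exponential concentration of first return times: Let (X_t)_{t≥0} be a Markov chain on a finite state space S. Then for any state s ∈ S with τ_s < ∞ and any t > 0, P[ H_s^+ ≥ t ] ≤ e · e^{−t/(e·τ_s)}, where H_s^+ is the first return time to s and τ_s is the maximal expected hitting time of s. -/
open MeasureTheory ProbabilityTheory Filter
open scoped ENNReal ENat

noncomputable section

/-- The first return time to `s` of the process `X` (`⊤` if `s` is never revisited). -/
def retTime {S Ω : Type*} (X : ℕ → Ω → S) (s : S) (ω : Ω) : ℕ∞ :=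
  ⨅ (m : ℕ) (_ : 0 < m ∧ X m ω = s), (m : ℕ∞)

/-- `avoidProb P s t x`: the probability that a Markov chain with transition kernel `P`
started at `x` avoids state `s` during the next `t` steps. -/
def avoidProb {S : Type*} [Fintype S] [DecidableEq S] (P : S → S → ℝ≥0∞) (s : S) :
    ℕ → S → ℝ≥0∞
  | 0, _ => 1
  | t + 1, x => ∑ y ∈ Finset.univ.erase s, P x y * avoidProb P s t y

/-- Expected first return time to `s` of a chain with kernel `P` started at `x`. -/
def expRet {S : Type*} [Fintype S] [DecidableEq S] (P : S → S → ℝ≥0∞) (s x : S) : ℝ≥0∞ :=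
  ∑' t : ℕ, avoidProb P s t x

/-- Maximal expected hitting time `τ_s = max_{x} E_x[H_s^+]`. -/
def maxHit {S : Type*} [Fintype S] [DecidableEq S] (P : S → S → ℝ≥0∞) (s : S) : ℝ≥0∞ :=
  ⨆ x, expRet P s x

set_option linter.unusedSectionVars false
set_option linter.unusedVariables false
section AUX
open Finset
variable {S : Type*} [Fintype S] [DecidableEq S]

lemma avoid_le_one (P : S → S → ℝ≥0∞) (hrow : ∀ x, ∑ y, P x y = 1) (s : S) :
    ∀ n x, avoidProb P s n x ≤ 1
  | 0, x => le_refl 1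
  | (n+1), x => by
      show ∑ y ∈ Finset.univ.erase s, P x y * avoidProb P s n y ≤ 1
      calc ∑ y ∈ univ.erase s, P x y * avoidProb P s n y
          ≤ ∑ y ∈ univ.erase s, P x y * 1 :=
            Finset.sum_le_sum fun y _ => mul_le_mul_right (avoid_le_one P hrow s n y) _
        _ ≤ ∑ y, P x y := by
            simp only [mul_one]
            exact Finset.sum_le_sum_of_subset (Finset.subset_univ _)
        _ = 1 := hrow x

lemma avoid_submult (P : S → S → ℝ≥0∞) (s : S) :
    ∀ m n x, avoidProb P s (m + n) x ≤ avoidProb P s m x * ⨆ y, avoidProb P s n y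
  | 0, n, x => by
      simpa [avoidProb] using le_iSup (fun y => avoidProb P s n y) x
  | (m+1), n, x => by
      have h1 : m + 1 + n = (m + n) + 1 := by omega
      rw [h1]
      show ∑ y ∈ Finset.univ.erase s, P x y * avoidProb P s (m + n) y ≤ _
      show _ ≤ (∑ y ∈ Finset.univ.erase s, P x y * avoidProb P s m y) * ⨆ y, avoidProb P s n y
      rw [Finset.sum_mul]
      refine Finset.sum_le_sum fun y _ => ?_
      rw [mul_assoc]
      exact mul_le_mul_right (avoid_submult P s m n y) _

lemma expRet_le_maxHit (P : S → S → ℝ≥0∞) (s x : S) : expRet P s x ≤ maxHit P s :=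
  le_iSup (fun x => expRet P s x) x

lemma star_ineq (P : S → S → ℝ≥0∞) (hrow : ∀ x, ∑ y, P x y = 1) (s : S) (m : ℕ) :
    (⨆ x, avoidProb P s m x) * ∑ i ∈ Finset.range (m+1), (⨆ y, avoidProb P s i y)⁻¹
      ≤ maxHit P s := by
  rw [ENNReal.iSup_mul]
  refine iSup_le fun x => ?_
  rw [Finset.mul_sum]
  have key : ∀ i ∈ Finset.range (m+1),
      avoidProb P s m x * (⨆ y, avoidProb P s (m - i) y)⁻¹ ≤ avoidProb P s i x := by
    intro i hi
    rw [Finset.mem_range] at hi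
    have hsplit : i + (m - i) = m := by omega
    have hsub := avoid_submult P s i (m - i) x
    rw [hsplit] at hsub
    set b := ⨆ y, avoidProb P s (m - i) y with hb
    rcases eq_or_ne b 0 with h0 | h0
    · rw [h0] at hsub; simp only [mul_zero, le_zero_iff] at hsub
      rw [hsub, zero_mul]; exact zero_le
    · have hbt : b ≠ ⊤ := by
        refine ne_top_of_le_ne_top (by simp) (iSup_le fun y => avoid_le_one P hrow s _ y)
      rw [← div_eq_mul_inv, ENNReal.div_le_iff_le_mul (Or.inl h0) (Or.inl hbt)]
      exact hsub
  calc ∑ i ∈ Finset.range (m+1), avoidProb P s m x * (⨆ y, avoidProb P s i y)⁻¹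
      = ∑ i ∈ Finset.range (m+1), avoidProb P s m x * (⨆ y, avoidProb P s (m+1-1-i) y)⁻¹ :=
        (Finset.sum_range_reflect (fun i => avoidProb P s m x * (⨆ y, avoidProb P s i y)⁻¹) (m+1)).symm
    _ ≤ ∑ i ∈ Finset.range (m+1), avoidProb P s i x := by
        refine Finset.sum_le_sum fun i hi => ?_
        have : m + 1 - 1 - i = m - i := by omega
        rw [this]; exact key i hi
    _ ≤ expRet P s x := ENNReal.sum_le_tsum _
    _ ≤ maxHit P s := expRet_le_maxHit P s x

variable {S : Type*} [Fintype S] [DecidableEq S] [MeasurableSpace S] [MeasurableSingletonClass S]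
variable {Ω : Type*} [MeasurableSpace Ω]

/-- partition a measurable set by the (finitely many) values of a function -/
lemma measure_eq_sum_fiber {ι : Type*} [Fintype ι] (μ : Measure Ω) (g : Ω → ι) (B : Set Ω)
    (hmeas : ∀ x, MeasurableSet (B ∩ {ω | g ω = x})) :
    μ B = ∑ x, μ (B ∩ {ω | g ω = x}) := by
  have hcover : B = ⋃ x ∈ (Finset.univ : Finset ι), B ∩ {ω | g ω = x} := by
    ext ω
    simp only [Set.mem_iUnion, Set.mem_inter_iff, Set.mem_setOf_eq, Finset.mem_coe,
      Finset.mem_univ, exists_prop, true_and]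
    exact ⟨fun h => ⟨g ω, h, rfl⟩, fun ⟨x, h, _⟩ => h⟩
  conv_lhs => rw [hcover]
  rw [measure_biUnion_finset ?_ (fun x _ => hmeas x)]
  intro x _ y _ hxy
  simp only [Function.onFun, Set.disjoint_left]
  rintro ω ⟨-, h1⟩ ⟨-, h2⟩
  exact hxy (h1 ▸ h2 ▸ rfl)

section chain
variable (μ : Measure Ω) (X : ℕ → Ω → S) (s : S)

def avoidEvt (m : ℕ) : Set Ω := {ω | ∀ i, 1 ≤ i → i ≤ m → X i ω ≠ s}

def pathEvt (m : ℕ) (h : Fin (m+1) → S) : Set Ω := {ω | ∀ i : Fin (m+1), X i.val ω = h i}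

def nu (m : ℕ) (x : S) : ℝ≥0∞ := μ ({ω | X m ω = x} ∩ avoidEvt X s m)

lemma mPath (hX : ∀ t, Measurable (X t)) (m : ℕ) (h : Fin (m+1) → S) : MeasurableSet (pathEvt X m h) := by
  have : pathEvt X m h = ⋂ i : Fin (m+1), (X i.val)⁻¹' {h i} := by
    ext ω; simp [pathEvt, Set.mem_iInter]
  rw [this]
  exact MeasurableSet.iInter fun i => hX i.val (measurableSet_singleton _)

lemma mAvoid (hX : ∀ t, Measurable (X t)) (m : ℕ) : MeasurableSet (avoidEvt X s m) := by
  have : avoidEvt X s m = ⋂ (i : ℕ), ⋂ (_ : 1 ≤ i), ⋂ (_ : i ≤ m), (X i)⁻¹' {s}ᶜ := by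
    ext ω; simp [avoidEvt, Set.mem_iInter]
  rw [this]
  exact MeasurableSet.iInter fun i => MeasurableSet.iInter fun _ =>
    MeasurableSet.iInter fun _ => hX i (measurableSet_singleton _).compl

lemma measure_eq_sum_path (hX : ∀ t, Measurable (X t)) (m : ℕ) (B : Set Ω) (hB : MeasurableSet B) :
    μ B = ∑ h : Fin (m+1) → S, μ (B ∩ pathEvt X m h) := by
  have := measure_eq_sum_fiber μ (fun ω (i : Fin (m+1)) => X i.val ω) B
    (fun h => hB.inter (by
      have : {ω | (fun i : Fin (m+1) => X i.val ω) = h} = pathEvt X m h := by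
        ext ω; simp [pathEvt, funext_iff]
      rw [this]; exact mPath X hX m h))
  rw [this]
  congr 1; ext h; congr 1
  ext ω; simp [pathEvt, funext_iff]

lemma measure_eq_sum_state (hX : ∀ t, Measurable (X t)) (m : ℕ) (B : Set Ω) (hB : MeasurableSet B) :
    μ B = ∑ x : S, μ (B ∩ {ω | X m ω = x}) :=
  measure_eq_sum_fiber μ (X m) B (fun x => hB.inter (hX m (measurableSet_singleton _)))

lemma nu_succ_self (m : ℕ) : nu μ X s (m+1) s = 0 := by
  have : {ω | X (m+1) ω = s} ∩ avoidEvt X s (m+1) = ∅ := by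
    ext ω
    simp only [Set.mem_inter_iff, Set.mem_setOf_eq, Set.mem_empty_iff_false, iff_false, not_and]
    intro h1 h2
    exact h2 (m+1) (by omega) le_rfl h1
  rw [nu, this, measure_empty]

lemma nu_succ (hX : ∀ t, Measurable (X t)) (P : S → S → ℝ≥0∞)
    (hmarkov : ∀ (t : ℕ) (h : Fin (t + 1) → S) (s' : S),
      μ {ω | X (t + 1) ω = s' ∧ ∀ i : Fin (t + 1), X i.val ω = h i}
        = P (h (Fin.last t)) s' * μ {ω | ∀ i : Fin (t + 1), X i.val ω = h i})
    (m : ℕ) (x : S) (hx : x ≠ s) :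
    nu μ X s (m+1) x = ∑ z, nu μ X s m z * P z x := by
  classical
  -- step 1 : reduce the avoid event to time m
  have h1 : {ω | X (m+1) ω = x} ∩ avoidEvt X s (m+1)
      = {ω | X (m+1) ω = x} ∩ avoidEvt X s m := by
    ext ω
    simp only [Set.mem_inter_iff, Set.mem_setOf_eq, avoidEvt, and_congr_right_iff]
    intro hω
    constructor
    · intro h i hi1 him; exact h i hi1 (by omega)
    · intro h i hi1 him
      rcases Nat.lt_or_ge i (m+1) with h' | h'
      · exact h i hi1 (by omega)
      · have : i = m + 1 := by omega
        rw [this, hω]; exact hx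
  -- the path decomposition of both sides
  have key : ∀ (B : Set Ω) (hB : MeasurableSet B),
      μ (B ∩ avoidEvt X s m) = ∑ h : Fin (m+1) → S,
        (if (∀ i : Fin (m+1), 1 ≤ i.val → h i ≠ s) then μ (B ∩ pathEvt X m h) else 0) := by
    intro B hB
    rw [measure_eq_sum_path μ X hX m (B ∩ avoidEvt X s m) (hB.inter (mAvoid X s hX m))]
    refine Finset.sum_congr rfl fun h _ => ?_
    by_cases hh : ∀ i : Fin (m+1), 1 ≤ i.val → h i ≠ s
    · rw [if_pos hh]
      congr 1
      ext ω
      simp only [Set.mem_inter_iff, Set.mem_setOf_eq, avoidEvt, pathEvt]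
      constructor
      · rintro ⟨⟨hB', -⟩, hp⟩; exact ⟨hB', hp⟩
      · rintro ⟨hB', hp⟩
        refine ⟨⟨hB', fun i hi1 him => ?_⟩, hp⟩
        have := hp ⟨i, by omega⟩
        rw [this]; exact hh ⟨i, by omega⟩ hi1
    · rw [if_neg hh]
      push_neg at hh
      obtain ⟨i, hi1, his⟩ := hh
      have : B ∩ avoidEvt X s m ∩ pathEvt X m h = ∅ := by
        ext ω
        simp only [Set.mem_inter_iff, Set.mem_setOf_eq, avoidEvt, pathEvt,
          Set.mem_empty_iff_false, iff_false]
        rintro ⟨⟨-, hav⟩, hp⟩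
        exact hav i.val hi1 (by omega) (by rw [hp i, his])
      rw [this, measure_empty]
  -- LHS
  have hLHS : nu μ X s (m+1) x = ∑ h : Fin (m+1) → S,
      (if (∀ i : Fin (m+1), 1 ≤ i.val → h i ≠ s)
        then P (h (Fin.last m)) x * μ (pathEvt X m h) else 0) := by
    rw [nu, h1,
      key {ω | X (m+1) ω = x} (show MeasurableSet {ω | X (m+1) ω = x} from hX (m+1) (measurableSet_singleton x))]
    · refine Finset.sum_congr rfl fun h _ => ?_
      by_cases hh : ∀ i : Fin (m+1), 1 ≤ i.val → h i ≠ s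
      · rw [if_pos hh, if_pos hh]
        have := hmarkov m h x
        have heq : {ω | X (m + 1) ω = x ∧ ∀ i : Fin (m + 1), X i.val ω = h i}
            = pathEvt X m h ∩ {ω | X (m+1) ω = x} := by
          ext ω; simp only [Set.mem_inter_iff, Set.mem_setOf_eq, pathEvt]; tauto
        rw [heq, Set.inter_comm] at this
        exact this
      · rw [if_neg hh, if_neg hh]
  -- RHS : express nu m z via paths
  have hzv : ∀ z, nu μ X s m z = ∑ h : Fin (m+1) → S,
      (if ((∀ i : Fin (m+1), 1 ≤ i.val → h i ≠ s) ∧ h (Fin.last m) = z)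
        then μ (pathEvt X m h) else 0) := by
    intro z
    rw [nu, key {ω | X m ω = z} (show MeasurableSet {ω | X m ω = z} from hX m (measurableSet_singleton z))]
    refine Finset.sum_congr rfl fun h _ => ?_
    by_cases hh : ∀ i : Fin (m+1), 1 ≤ i.val → h i ≠ s
    · rw [if_pos hh]
      by_cases hz : h (Fin.last m) = z
      · rw [if_pos ⟨hh, hz⟩]
        congr 1
        ext ω
        simp only [Set.mem_inter_iff, Set.mem_setOf_eq, pathEvt]
        constructor
        · rintro ⟨-, hp⟩; exact hp
        · intro hp
          refine ⟨?_, hp⟩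
          have hlast := hp (Fin.last m)
          rw [hz] at hlast
          exact hlast
      · rw [if_neg (by tauto)]
        have : {ω | X m ω = z} ∩ pathEvt X m h = ∅ := by
          ext ω
          simp only [Set.mem_inter_iff, Set.mem_setOf_eq, pathEvt,
            Set.mem_empty_iff_false, iff_false]
          rintro ⟨hz', hp⟩
          have hlast := hp (Fin.last m)
          apply hz
          rw [← hlast]
          exact hz'
        rw [this, measure_empty]
    · rw [if_neg hh, if_neg (by tauto)]
  rw [hLHS]
  have hre : ∀ z, nu μ X s m z * P z x = ∑ h : Fin (m+1) → S,
      (if ((∀ i : Fin (m+1), 1 ≤ i.val → h i ≠ s) ∧ h (Fin.last m) = z)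
        then μ (pathEvt X m h) else 0) * P z x := by
    intro z; rw [hzv z, Finset.sum_mul]
  rw [Finset.sum_congr rfl (fun z _ => hre z), Finset.sum_comm]
  refine Finset.sum_congr rfl fun h _ => ?_
  by_cases hh : ∀ i : Fin (m+1), 1 ≤ i.val → h i ≠ s
  · rw [if_pos hh]
    rw [Finset.sum_eq_single (h (Fin.last m))]
    · rw [if_pos ⟨hh, rfl⟩, mul_comm]
    · intro z _ hz
      rw [if_neg (by tauto), zero_mul]
    · intro hmem; exact absurd (Finset.mem_univ _) hmem
  · rw [if_neg hh]
    refine (Finset.sum_eq_zero fun z _ => ?_).symm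
    rw [if_neg (by tauto), zero_mul]

lemma exchange (hX : ∀ t, Measurable (X t)) (P : S → S → ℝ≥0∞)
    (hmarkov : ∀ (t : ℕ) (h : Fin (t + 1) → S) (s' : S),
      μ {ω | X (t + 1) ω = s' ∧ ∀ i : Fin (t + 1), X i.val ω = h i}
        = P (h (Fin.last t)) s' * μ {ω | ∀ i : Fin (t + 1), X i.val ω = h i}) :
    ∀ m n, ∑ x, nu μ X s m x * avoidProb P s n x
      = ∑ x, nu μ X s 0 x * avoidProb P s (m + n) x
  | 0, n => by rw [Nat.zero_add]
  | (m+1), n => by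
      have step : ∑ x, nu μ X s (m+1) x * avoidProb P s n x
          = ∑ z, nu μ X s m z * avoidProb P s (n+1) z := by
        rw [← Finset.sum_erase (Finset.univ) (a := s)
          (by rw [nu_succ_self, zero_mul])]
        calc ∑ x ∈ Finset.univ.erase s, nu μ X s (m+1) x * avoidProb P s n x
            = ∑ x ∈ Finset.univ.erase s, ∑ z, (nu μ X s m z * P z x) * avoidProb P s n x := by
              refine Finset.sum_congr rfl fun x hx => ?_
              rw [nu_succ μ X s hX P hmarkov m x (Finset.ne_of_mem_erase hx), Finset.sum_mul]
          _ = ∑ z, ∑ x ∈ Finset.univ.erase s, nu μ X s m z * (P z x * avoidProb P s n x) := by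
              rw [Finset.sum_comm]
              exact Finset.sum_congr rfl fun x _ => Finset.sum_congr rfl fun z _ => by ring
          _ = ∑ z, nu μ X s m z * avoidProb P s (n+1) z := by
              refine Finset.sum_congr rfl fun z _ => ?_
              rw [← Finset.mul_sum]
              rfl
      rw [step, exchange hX P hmarkov m (n+1), show m + (n+1) = m+1+n from by omega]

lemma avoid_le_sup (hX : ∀ t, Measurable (X t)) [IsProbabilityMeasure μ] (P : S → S → ℝ≥0∞)
    (hrow : ∀ x, ∑ y, P x y = 1)
    (hmarkov : ∀ (t : ℕ) (h : Fin (t + 1) → S) (s' : S),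
      μ {ω | X (t + 1) ω = s' ∧ ∀ i : Fin (t + 1), X i.val ω = h i}
        = P (h (Fin.last t)) s' * μ {ω | ∀ i : Fin (t + 1), X i.val ω = h i})
    (m : ℕ) :
    μ (avoidEvt X s m) ≤ ⨆ x, avoidProb P s m x := by
  have h0 : avoidEvt X s 0 = Set.univ := by
    ext ω; simp only [avoidEvt, Set.mem_setOf_eq, Set.mem_univ, iff_true]
    intro i h1 h2; omega
  have hpart : μ (avoidEvt X s m) = ∑ x, nu μ X s m x := by
    rw [measure_eq_sum_state μ X hX m _ (mAvoid X s hX m)]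
    refine Finset.sum_congr rfl fun x _ => ?_
    rw [nu, Set.inter_comm]
  have h1 : ∑ x, nu μ X s m x = ∑ x, nu μ X s 0 x * avoidProb P s m x := by
    have := exchange μ X s hX P hmarkov m 0
    simp only [avoidProb, mul_one, Nat.add_zero] at this
    exact this
  have hsum0 : ∑ x, nu μ X s 0 x = 1 := by
    calc ∑ x, nu μ X s 0 x = ∑ x, μ (Set.univ ∩ {ω | X 0 ω = x}) :=
          Finset.sum_congr rfl fun x _ => by rw [nu, h0, Set.inter_univ, Set.univ_inter]
      _ = μ Set.univ := (measure_eq_sum_state μ X hX 0 Set.univ MeasurableSet.univ).symm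
      _ = 1 := measure_univ
  calc μ (avoidEvt X s m) = ∑ x, nu μ X s 0 x * avoidProb P s m x := by rw [hpart, h1]
    _ ≤ ∑ x, nu μ X s 0 x * ⨆ y, avoidProb P s m y :=
        Finset.sum_le_sum fun x _ => mul_le_mul_right (le_iSup (fun y => avoidProb P s m y) x) _
    _ = (∑ x, nu μ X s 0 x) * ⨆ y, avoidProb P s m y := by rw [Finset.sum_mul]
    _ = ⨆ y, avoidProb P s m y := by rw [hsum0, one_mul]

end chain


lemma core_real (τ : ℝ) (hτ1 : 1 ≤ τ) (m : ℕ)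
    (hm : Real.exp 1 * τ < (m:ℝ) + 1)
    (r : ℕ → ℝ) (hrpos : ∀ i ≤ m, 0 < r i) (hrle : ∀ i ≤ m, r i ≤ 1)
    (q : ℕ → ℝ) (hq : ∀ j, q j = ∑ i ∈ Finset.range (j+1), (r i)⁻¹)
    (hstar : ∀ j ≤ m, r j * q j ≤ τ) :
    r m ≤ Real.exp (1 - ((m:ℝ)+1) / (Real.exp 1 * τ)) := by
  have he : (2:ℝ) ≤ Real.exp 1 := by have := Real.add_one_le_exp 1; linarith
  have hτ0 : 0 < τ := by linarith
  have hqlb : ∀ j ≤ m, (j:ℝ) + 1 ≤ q j := by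
    intro j hj
    rw [hq j]
    have := Finset.card_nsmul_le_sum (Finset.range (j+1)) (fun i => (r i)⁻¹) 1
      (fun i hi => by
        rw [Finset.mem_range] at hi
        exact (one_le_inv₀ (hrpos i (by omega))).mpr (hrle i (by omega)))
    simpa using this
  have hqpos : ∀ j ≤ m, 0 < q j := fun j hj => lt_of_lt_of_le (by positivity) (hqlb j hj)
  have hm2 : 2 ≤ m := by
    have h1 : (2:ℝ) ≤ Real.exp 1 * τ := by nlinarith
    have h2 : (2:ℝ) < (m:ℝ) + 1 := lt_of_le_of_lt h1 hm
    have h3 : (2:ℕ) < m + 1 := by exact_mod_cast h2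
    omega
  -- key recursion
  have hrec : ∀ j, j + 1 ≤ m → q j ≤ q (j+1) * (1 - 1/τ) := by
    intro j hj
    have h1 : q (j+1) = q j + (r (j+1))⁻¹ := by
      rw [hq (j+1), hq j, Finset.sum_range_succ]
    have h2 : r (j+1) * q (j+1) ≤ τ := hstar (j+1) hj
    have h3 : 0 < r (j+1) := hrpos (j+1) hj
    have h4 : 0 < q (j+1) := hqpos (j+1) hj
    have h5 : q (j+1) / τ ≤ (r (j+1))⁻¹ := by
      rw [inv_eq_one_div, div_le_div_iff₀ hτ0 h3]
      nlinarith
    have h6 : q (j+1) * (1 - 1/τ) = q (j+1) - q (j+1)/τ := by ring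
    have h7 : q j = q (j+1) - (r (j+1))⁻¹ := by linarith
    linarith
  have hτgt1 : 1 < τ := by
    by_contra hc
    push_neg at hc
    have hτe : τ = 1 := le_antisymm hc hτ1
    have h01 : (0:ℕ) + 1 ≤ m := by omega
    have := hrec 0 h01
    have hq0 : (1:ℝ) ≤ q 0 := by simpa using hqlb 0 (by omega)
    rw [hτe] at this
    simp at this
    have := hqpos 1 (by omega)
    nlinarith
  set c : ℝ := τ / (τ - 1) with hc
  have hτm1 : 0 < τ - 1 := by linarith
  have hcgt : 1 < c := by rw [hc]; rw [lt_div_iff₀ hτm1]; linarith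
  have hgeo : ∀ m0 d, m0 + d ≤ m → q m0 * c ^ d ≤ q (m0 + d) := by
    intro m0 d
    induction d with
    | zero => intro h; simp
    | succ d ih =>
        intro h
        have hd : m0 + d ≤ m := by omega
        have := hrec (m0 + d) (by omega)
        have h4 := hqpos (m0 + d + 1) (by omega)
        have hkeyc : (1 - 1/τ) * c = 1 := by rw [hc]; field_simp
        have step : q (m0 + d) * c ≤ q (m0 + d + 1) := by
          calc q (m0 + d) * c ≤ (q (m0 + d + 1) * (1 - 1/τ)) * c :=
                mul_le_mul_of_nonneg_right this (by positivity)
            _ = q (m0 + d + 1) := by rw [mul_assoc, hkeyc, mul_one]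
        calc q m0 * c ^ (d+1) = (q m0 * c ^ d) * c := by ring
          _ ≤ q (m0 + d) * c := by nlinarith [ih hd, hcgt]
          _ ≤ q (m0 + d + 1) := step
          _ = q (m0 + (d+1)) := by ring_nf
  -- choose m0
  set m0 : ℕ := ⌈τ⌉₊ - 1 with hm0
  have hceil1 : 1 ≤ ⌈τ⌉₊ := Nat.one_le_ceil_iff.mpr hτ0
  have hm01 : (m0:ℝ) + 1 = (⌈τ⌉₊ : ℝ) := by
    rw [hm0]; push_cast [Nat.cast_sub hceil1]; ring
  have hm0leτ : (m0 : ℝ) ≤ τ := by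
    have := Nat.ceil_lt_add_one (le_of_lt hτ0)
    linarith [hm01 ▸ this]
  have hm0lem : m0 ≤ m := by
    have hτm : τ ≤ (m:ℝ) + 1 := by nlinarith
    have : ⌈τ⌉₊ ≤ m + 1 := Nat.ceil_le.mpr (by exact_mod_cast hτm)
    omega
  set d : ℕ := m - m0 with hd
  have hmd : m0 + d = m := by omega
  have hqm : τ * c ^ d ≤ q m := by
    have h1 : τ ≤ q m0 := le_trans (by rw [hm01]; exact Nat.le_ceil τ) (hqlb m0 hm0lem)
    have h2 := hgeo m0 d (by omega)
    rw [hmd] at h2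
    have hcpow : 0 < c ^ d := pow_pos (by linarith) d
    nlinarith
  have hrm : r m ≤ ((τ - 1)/τ) ^ d := by
    have h1 := hstar m le_rfl
    have h2 := hrpos m le_rfl
    have h3 := hqpos m le_rfl
    have hinv : ((τ-1)/τ) = c⁻¹ := by rw [hc]; field_simp
    have hcpow : 0 < c ^ d := pow_pos (by linarith) d
    rw [hinv, inv_pow, inv_eq_one_div, le_div_iff₀ hcpow]
    nlinarith [mul_le_mul_of_nonneg_left hqm (le_of_lt h2), h1, hτ0]
  -- final numeric step
  have hlog : Real.log ((τ-1)/τ) ≤ -1/τ := by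
    have ha := Real.log_le_sub_one_of_pos (show (0:ℝ) < (τ-1)/τ by positivity)
    have hb : (τ-1)/τ - 1 = -1/τ := by field_simp; ring
    linarith
  have hpow_exp : ((τ - 1)/τ) ^ d = Real.exp ((d:ℝ) * Real.log ((τ-1)/τ)) := by
    rw [← Real.log_pow, Real.exp_log (by positivity)]
  have hdR : (d:ℝ) = (m:ℝ) - (m0:ℝ) := by
    rw [hd]; push_cast [Nat.cast_sub hm0lem]; ring
  have hfinal : (d:ℝ) * Real.log ((τ-1)/τ) ≤ 1 - ((m:ℝ)+1) / (Real.exp 1 * τ) := by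
    have hd0 : (0:ℝ) ≤ d := Nat.cast_nonneg d
    have step1 : (d:ℝ) * Real.log ((τ-1)/τ) ≤ (d:ℝ) * (-1/τ) :=
      mul_le_mul_of_nonneg_left hlog hd0
    have step2 : ((m:ℝ)+1) / (Real.exp 1 * τ) ≤ 1 + (d:ℝ)/τ := by
      have hid : (1 + (d:ℝ)/τ) * (Real.exp 1 * τ) = Real.exp 1 * (τ + (d:ℝ)) := by
        field_simp
      rw [div_le_iff₀ (by positivity), hid]
      have hmR : (2:ℝ) ≤ m := by exact_mod_cast hm2
      have hτd : (m:ℝ) ≤ τ + (d:ℝ) := by rw [hdR]; linarith [hm0leτ]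
      nlinarith
    have : (d:ℝ) * (-1/τ) = -((d:ℝ)/τ) := by ring
    linarith
  calc r m ≤ ((τ-1)/τ)^d := hrm
    _ = Real.exp ((d:ℝ) * Real.log ((τ-1)/τ)) := hpow_exp
    _ ≤ Real.exp (1 - ((m:ℝ)+1)/(Real.exp 1 * τ)) := Real.exp_le_exp.mpr hfinal

section GLUE
variable {S : Type*} [Fintype S] [DecidableEq S]

lemma one_le_maxHit (P : S → S → ℝ≥0∞) (s : S) : (1:ℝ≥0∞) ≤ maxHit P s :=
  calc (1:ℝ≥0∞) = avoidProb P s 0 s := rfl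
    _ ≤ expRet P s s := ENNReal.le_tsum 0
    _ ≤ maxHit P s := expRet_le_maxHit P s s

lemma sup_avoid_le (P : S → S → ℝ≥0∞)
    (hrow : ∀ x, ∑ y, P x y = 1) (s : S) (hτ : maxHit P s ≠ ⊤) (m : ℕ) :
    (⨆ x, avoidProb P s m x)
      ≤ ENNReal.ofReal (Real.exp (1 - ((m:ℝ)+1) / (Real.exp 1 * (maxHit P s).toReal))) := by
  set τ := (maxHit P s).toReal with hτdef
  have hb1 : ∀ n, (⨆ x, avoidProb P s n x) ≤ 1 := fun n => iSup_le (avoid_le_one P hrow s n)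
  have hbtop : ∀ n, (⨆ x, avoidProb P s n x) ≠ ⊤ :=
    fun n => ne_top_of_le_ne_top (by simp) (hb1 n)
  have hτR : 1 ≤ τ := by
    rw [hτdef, ← ENNReal.toReal_one]
    exact ENNReal.toReal_mono hτ (one_le_maxHit P s)
  have hτ0 : 0 < τ := by linarith
  rcases le_or_gt ((m:ℝ)+1) (Real.exp 1 * τ) with hcase | hcase
  · have hnn : (0:ℝ) ≤ 1 - ((m:ℝ)+1)/(Real.exp 1 * τ) := by
      rw [sub_nonneg, div_le_one (by positivity)]
      exact hcase
    calc (⨆ x, avoidProb P s m x) ≤ 1 := hb1 m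
      _ = ENNReal.ofReal 1 := ENNReal.ofReal_one.symm
      _ ≤ _ := ENNReal.ofReal_le_ofReal (Real.one_le_exp hnn)
  · by_cases hzero : ∃ i ≤ m, (⨆ x, avoidProb P s i x) = 0
    · obtain ⟨i, him, hi0⟩ := hzero
      have hzm : (⨆ x, avoidProb P s m x) = 0 := by
        rw [← le_zero_iff]
        refine iSup_le fun x => ?_
        have hsplit : i + (m - i) = m := by omega
        have hsub := avoid_submult P s i (m-i) x
        rw [hsplit] at hsub
        calc avoidProb P s m x ≤ avoidProb P s i x * ⨆ y, avoidProb P s (m-i) y := hsub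
          _ ≤ (⨆ y, avoidProb P s i y) * 1 :=
              mul_le_mul' (le_iSup (fun y => avoidProb P s i y) x) (hb1 _)
          _ = 0 := by rw [hi0, zero_mul]
      rw [hzm]; exact zero_le
    · push_neg at hzero
      set r : ℕ → ℝ := fun i => (⨆ x, avoidProb P s i x).toReal with hr
      set q : ℕ → ℝ := fun j => ∑ i ∈ Finset.range (j+1), (r i)⁻¹ with hqdef
      have hrpos : ∀ i ≤ m, 0 < r i := fun i hi => ENNReal.toReal_pos (hzero i hi) (hbtop i)
      have hrle : ∀ i ≤ m, r i ≤ 1 := fun i hi => by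
        rw [hr, ← ENNReal.toReal_one]
        exact ENNReal.toReal_mono (by simp) (hb1 i)
      have hstar : ∀ j ≤ m, r j * q j ≤ τ := by
        intro j hj
        have hstar0 := star_ineq P hrow s j
        have hfin : ∀ i ∈ Finset.range (j+1), ((⨆ x, avoidProb P s i x))⁻¹ ≠ ⊤ := by
          intro i hi
          rw [Finset.mem_range] at hi
          rw [Ne, ENNReal.inv_eq_top]
          exact hzero i (by omega)
        have hmono := ENNReal.toReal_mono hτ hstar0
        rw [ENNReal.toReal_mul, ENNReal.toReal_sum hfin] at hmono
        simpa [hr, hqdef, ENNReal.toReal_inv] using hmono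
      have hcore := core_real τ hτR m hcase r hrpos hrle q (fun j => rfl) hstar
      calc (⨆ x, avoidProb P s m x) = ENNReal.ofReal (r m) :=
            (ENNReal.ofReal_toReal (hbtop m)).symm
        _ ≤ _ := ENNReal.ofReal_le_ofReal hcore

end GLUE

end AUX

/-- exponential concentration of first return times:
`P[H_s^+ ≥ t] ≤ e · e^{-t/(e·τ_s)}` for any `t > 0`, for any initial distribution. -/
theorem stmt4 {S : Type*} [Fintype S] [DecidableEq S] [MeasurableSpace S]
    [MeasurableSingletonClass S]
    {Ω : Type*} [MeasurableSpace Ω] (μ : Measure Ω) [IsProbabilityMeasure μ]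
    (X : ℕ → Ω → S) (hX : ∀ t, Measurable (X t))
    (P : S → S → ℝ≥0∞) (hrow : ∀ x, ∑ y, P x y = 1)
    (hmarkov : ∀ (t : ℕ) (h : Fin (t + 1) → S) (s' : S),
      μ {ω | X (t + 1) ω = s' ∧ ∀ i : Fin (t + 1), X i.val ω = h i}
        = P (h (Fin.last t)) s' * μ {ω | ∀ i : Fin (t + 1), X i.val ω = h i})
    (s : S) (hτ : maxHit P s ≠ ⊤) (t : ℝ) (ht : 0 < t) :
    μ {ω | ENNReal.ofReal t ≤ (retTime X s ω : ℝ≥0∞)}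
      ≤ ENNReal.ofReal
          (Real.exp 1 * Real.exp (-(t / (Real.exp 1 * (maxHit P s).toReal)))) := by
  have hτ1 : (1:ℝ) ≤ (maxHit P s).toReal := by
    rw [← ENNReal.toReal_one]
    exact ENNReal.toReal_mono hτ (one_le_maxHit P s)
  set τ := (maxHit P s).toReal with hτdef
  set m := ⌈t⌉₊ - 1 with hm
  have hceil : 1 ≤ ⌈t⌉₊ := Nat.one_le_ceil_iff.mpr ht
  have hm1 : m + 1 = ⌈t⌉₊ := by omega
  have hsub : {ω | ENNReal.ofReal t ≤ (retTime X s ω : ℝ≥0∞)} ⊆ avoidEvt X s m := by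
    intro ω hω i hi1 him hXi
    have hret : retTime X s ω ≤ (i : ℕ∞) := by
      refine le_trans (iInf_le _ i) ?_
      exact iInf_le _ ⟨by omega, hXi⟩
    have h2 : (ENNReal.ofReal t) ≤ ((i:ℕ∞) : ℝ≥0∞) := le_trans hω (by exact_mod_cast hret)
    have h3 : ((i:ℕ∞):ℝ≥0∞) = ((i:ℕ):ℝ≥0∞) := by exact_mod_cast rfl
    rw [h3, ← ENNReal.ofReal_natCast i] at h2
    have h4 : t ≤ (i:ℝ) := (ENNReal.ofReal_le_ofReal_iff (by positivity)).mp h2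
    have h5 : ⌈t⌉₊ ≤ i := Nat.ceil_le.mpr h4
    omega
  calc μ {ω | ENNReal.ofReal t ≤ (retTime X s ω : ℝ≥0∞)}
      ≤ μ (avoidEvt X s m) := measure_mono hsub
    _ ≤ ⨆ x, avoidProb P s m x := avoid_le_sup μ X s hX P hrow hmarkov m
    _ ≤ ENNReal.ofReal (Real.exp (1 - ((m:ℝ)+1) / (Real.exp 1 * τ))) :=
        sup_avoid_le P hrow s hτ m
    _ ≤ ENNReal.ofReal (Real.exp 1 * Real.exp (-(t / (Real.exp 1 * τ)))) := by
        rw [← Real.exp_add]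
        apply ENNReal.ofReal_le_ofReal
        apply Real.exp_le_exp.mpr
        have hle : t ≤ ((m:ℝ)+1) := by
          have hcast : ((m:ℝ)+1) = (⌈t⌉₊:ℝ) := by exact_mod_cast hm1
          rw [hcast]; exact Nat.le_ceil t
        have hdiv : t / (Real.exp 1 * τ) ≤ ((m:ℝ)+1)/(Real.exp 1 * τ) := by
          have hpos : (0:ℝ) < Real.exp 1 * τ := by positivity
          gcongr
        linarith
end
end

section
/- MEHC under potential-based reward shaping changes by at most a factor of two: Let M = (S, A, p, r) be a bounded MDP with rewards in [0, r_max], finite maximum expected hitting cost κ(M) < ∞, and unsaturated optimal average reward ρ*(M) < r_max. Then for any potential φ : S → ℝ such that the shaped MDP M^φ remains [0, r_max]-bounded, (1/2)·κ(M) ≤ κ(M^φ) ≤ 2·κ(M). -/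
open scoped ENNReal

noncomputable section

/-- The probability that a Markov chain with transition kernel `Q` started at `s`
traverses exactly the initial path segment `path`. -/
def pathProb {S : Type*} [DecidableEq S] (Q : S → S → ℝ≥0∞) (s : S) {t : ℕ}
    (path : Fin (t + 1) → S) : ℝ≥0∞ :=
  (if path 0 = s then 1 else 0) * ∏ i : Fin t, Q (path i.castSucc) (path i.succ)

/-- The expected hitting time `E[h_{s→s'}]` of `s'` from `s` for the kernel `Q`,
via `E[h] = ∑_t P[h > t]`, where `h > t` iff the path avoids `s'` up to time `t`. -/
def hitTimeE {S : Type*} [Fintype S] [DecidableEq S] (Q : S → S → ℝ≥0∞) (s s' : S) :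
    ℝ≥0∞ :=
  ∑' t : ℕ, ∑ path : Fin (t + 1) → S,
    if ∀ i, path i ≠ s' then pathProb Q s path else 0

/-- The expected hitting cost `E[∑_{t=0}^{h_{s→s'}-1} c(s_t)]` of `s'` from `s`
for the kernel `Q` and per-state cost `c`. -/
def hitCostE {S : Type*} [Fintype S] [DecidableEq S] (Q : S → S → ℝ≥0∞) (c : S → ℝ≥0∞)
    (s s' : S) : ℝ≥0∞ :=
  ∑' t : ℕ, ∑ path : Fin (t + 1) → S,
    if ∀ i, path i ≠ s' then pathProb Q s path * c (path (Fin.last t)) else 0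

/-- The state-transition kernel induced by following policy `π` in an MDP with
transition function `p`. -/
def polKernel {S A : Type*} (p : S → A → S → ℝ≥0∞) (π : S → A) : S → S → ℝ≥0∞ :=
  fun s s' => p s (π s) s'

/-- The diameter `D(M) = max_{s,s'} min_π E[h_{s→s'}(M,π)]` of an MDP. -/
def diam {S A : Type*} [Fintype S] [DecidableEq S] (p : S → A → S → ℝ≥0∞) : ℝ≥0∞ :=
  ⨆ s, ⨆ s', ⨅ π : S → A, hitTimeE (polKernel p π) s s'

/-- The maximum expected hitting cost
`κ(M) = max_{s,s'} min_π E[∑_{t=0}^{h_{s→s'}(M,π)-1} (r_max - r_t)]` of an MDP with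
mean rewards `rbar`. -/
def mehc {S A : Type*} [Fintype S] [DecidableEq S] (p : S → A → S → ℝ≥0∞) (rmax : ℝ)
    (rbar : S → A → ℝ) : ℝ≥0∞ :=
  ⨆ s, ⨆ s', ⨅ π : S → A,
    hitCostE (polKernel p π) (fun x => ENNReal.ofReal (rmax - rbar x (π x))) s s'

open Filter

/-- The expected reward collected at step `t` when following policy `π` from state `s`. -/
def expRewardAt {S A : Type*} [Fintype S] [DecidableEq S] (p : S → A → S → ℝ≥0∞)
    (rbar : S → A → ℝ) (π : S → A) (s : S) (t : ℕ) : ℝ :=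
  ∑ path : Fin (t + 1) → S,
    (pathProb (polKernel p π) s path).toReal
      * rbar (path (Fin.last t)) (π (path (Fin.last t)))

/-- The running average `T ↦ (1/T)·E[∑_{t=0}^{T-1} r_t]` of expected rewards. -/
def avgSeq {S A : Type*} [Fintype S] [DecidableEq S] (p : S → A → S → ℝ≥0∞)
    (rbar : S → A → ℝ) (π : S → A) (s : S) (T : ℕ) : ℝ :=
  (1 / (T : ℝ)) * ∑ t ∈ Finset.range T, expRewardAt p rbar π s t

/-- The average reward (gain) `ρ(M, π, s)` (the limit of the running averages, which
exists for stationary policies on finite MDPs, expressed as a `limsup`). -/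
def gain {S A : Type*} [Fintype S] [DecidableEq S] (p : S → A → S → ℝ≥0∞)
    (rbar : S → A → ℝ) (π : S → A) (s : S) : ℝ :=
  Filter.limsup (avgSeq p rbar π s) atTop

/-- The optimal average reward `ρ*(M) = max_s max_π ρ(M, π, s)`. -/
def optGain {S A : Type*} [Fintype S] [DecidableEq S] (p : S → A → S → ℝ≥0∞)
    (rbar : S → A → ℝ) : ℝ :=
  ⨆ s : S, ⨆ π : S → A, gain p rbar π s

/-- The mean rewards of the PBRS-shaped MDP `M^φ`. -/
def shapedRbar {S A : Type*} [Fintype S] (p : S → A → S → ℝ≥0∞) (rbar : S → A → ℝ)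
    (φ : S → ℝ) : S → A → ℝ :=
  fun s a => rbar s a - φ s + ∑ s', (p s a s').toReal * φ s'

set_option linter.unusedSectionVars false
set_option maxHeartbeats 1000000
namespace Stmt13

variable {S : Type*} [Fintype S] [DecidableEq S]

def snocEquiv (S : Type*) (t : ℕ) : ((Fin (t + 1) → S) × S) ≃ (Fin (t + 2) → S) where
  toFun px := Fin.snoc px.1 px.2
  invFun q := (fun i => q i.castSucc, q (Fin.last _))
  left_inv := by
    rintro ⟨pa, x⟩
    refine Prod.ext ?_ ?_
    · show (fun i => (Fin.snoc pa x : Fin (t+2) → S) i.castSucc) = pa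
      funext i; exact Fin.snoc_castSucc _ _ _
    · show (Fin.snoc pa x : Fin (t+2) → S) (Fin.last _) = x
      exact Fin.snoc_last _ _
  right_inv := by
    intro q
    show Fin.snoc (fun i => q i.castSucc) (q (Fin.last _)) = q
    funext i
    induction i using Fin.lastCases with
    | last => exact Fin.snoc_last _ _
    | cast i => exact Fin.snoc_castSucc _ _ _

lemma sum_snoc {M : Type*} [AddCommMonoid M] {t : ℕ} (g : (Fin (t + 2) → S) → M) :
    ∑ q : Fin (t + 2) → S, g q = ∑ pa : Fin (t + 1) → S, ∑ x : S, g (Fin.snoc pa x) := by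
  have h1 : ∑ q : Fin (t + 2) → S, g q
      = ∑ px : (Fin (t + 1) → S) × S, g (Fin.snoc px.1 px.2) :=
    (Fintype.sum_equiv (snocEquiv S t) _ _ (fun _ => rfl)).symm
  rw [h1, Fintype.sum_prod_type]

lemma pathProb_snoc (Q : S → S → ℝ≥0∞) (s : S) {t : ℕ} (pa : Fin (t + 1) → S) (x : S) :
    pathProb Q s (Fin.snoc pa x) = pathProb Q s pa * Q (pa (Fin.last t)) x := by
  unfold pathProb
  rw [Fin.prod_univ_castSucc (n := t)
    (f := fun i : Fin (t + 1) => Q ((Fin.snoc pa x : Fin (t+2) → S) i.castSucc)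
      ((Fin.snoc pa x : Fin (t+2) → S) i.succ))]
  have h0 : (Fin.snoc pa x : Fin (t + 2) → S) 0 = pa 0 := by
    rw [show (0 : Fin (t + 2)) = Fin.castSucc 0 by simp]
    exact Fin.snoc_castSucc _ _ _
  have hlast1 : (Fin.snoc pa x : Fin (t + 2) → S) ((Fin.last t).castSucc) = pa (Fin.last t) :=
    Fin.snoc_castSucc _ _ _
  have hlast2 : (Fin.snoc pa x : Fin (t + 2) → S) ((Fin.last t).succ) = x := by
    rw [Fin.succ_last]; exact Fin.snoc_last _ _
  have hfac : ∀ i : Fin t,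
      Q ((Fin.snoc pa x : Fin (t + 2) → S) (i.castSucc.castSucc))
        ((Fin.snoc pa x : Fin (t + 2) → S) (i.castSucc.succ))
      = Q (pa i.castSucc) (pa i.succ) := by
    intro i
    rw [Fin.succ_castSucc, Fin.snoc_castSucc, Fin.snoc_castSucc]
  rw [h0, hlast1, hlast2, Finset.prod_congr rfl (fun i _ => hfac i)]
  ring

/-- real kernel -/
def qr {S : Type*} (Q : S → S → ℝ≥0∞) : S → S → ℝ := fun x y => (Q x y).toReal

/-- Sub-stochastic transfer operator on a window `W`. -/
def opW (q : S → S → ℝ) (W : Finset S) (f : S → ℝ) : S → ℝ :=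
  fun x => if x ∈ W then ∑ y ∈ W, q x y * f y else 0

lemma forall_snoc_mem {t : ℕ} (pa : Fin (t + 1) → S) (x : S) (W : Finset S) :
    (∀ i, (Fin.snoc pa x : Fin (t + 2) → S) i ∈ W) ↔ (∀ i, pa i ∈ W) ∧ x ∈ W := by
  constructor
  · intro h
    refine ⟨fun i => ?_, ?_⟩
    · have := h i.castSucc; rwa [Fin.snoc_castSucc] at this
    · have := h (Fin.last _); rwa [Fin.snoc_last] at this
  · rintro ⟨h1, h2⟩ i
    induction i using Fin.lastCases with
    | last => rwa [Fin.snoc_last]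
    | cast i => rw [Fin.snoc_castSucc]; exact h1 i

/-- The key bridge between path sums and operator iterates. -/
lemma sum_path_eq (Q : S → S → ℝ≥0∞) (W : Finset S) (f : S → ℝ) (s : S) :
    ∀ t : ℕ, ∑ path : Fin (t + 1) → S,
      (if ∀ i, path i ∈ W then (pathProb Q s path).toReal * f (path (Fin.last t)) else 0)
      = if s ∈ W then (opW (qr Q) W)^[t] f s else 0 := by
  intro t
  induction t generalizing f with
  | zero =>
    have e : ∑ x : S,
        (if ∀ i : Fin 1, (fun _ : Fin 1 => x) i ∈ W then
          (pathProb Q s (fun _ : Fin 1 => x)).toReal * f ((fun _ : Fin 1 => x) (Fin.last 0)) else 0)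
        = ∑ path : Fin 1 → S,
          (if ∀ i, path i ∈ W then (pathProb Q s path).toReal * f (path (Fin.last 0)) else 0) :=
      Fintype.sum_equiv (Equiv.funUnique (Fin 1) S).symm _ _ (fun _ => rfl)
    rw [← e]
    simp only [Function.iterate_zero, id_eq]
    have hx : ∀ x : S,
        (if ∀ _i : Fin 1, x ∈ W then (pathProb Q s (fun _ : Fin 1 => x)).toReal * f x else 0)
        = if x = s then (if x ∈ W then f x else 0) else 0 := by
      intro x
      unfold pathProb
      by_cases hxs : x = s <;> by_cases hxW : x ∈ W <;>
        simp [hxs, hxW, forall_const]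
    rw [Finset.sum_congr rfl (fun x _ => hx x), Finset.sum_ite_eq' Finset.univ s]
    simp
  | succ t ih =>
    rw [sum_snoc]
    have hterm : ∀ pa : Fin (t + 1) → S,
        (∑ x : S, if ∀ i, (Fin.snoc pa x : Fin (t + 2) → S) i ∈ W then
          (pathProb Q s (Fin.snoc pa x)).toReal * f ((Fin.snoc pa x : Fin (t+2) → S) (Fin.last (t+1))) else 0)
        = (if ∀ i, pa i ∈ W then (pathProb Q s pa).toReal
            * (opW (qr Q) W f) (pa (Fin.last t)) else 0) := by
      intro pa
      by_cases hpa : ∀ i, pa i ∈ W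
      · rw [if_pos hpa]
        have h1 : ∀ x : S, (if ∀ i, (Fin.snoc pa x : Fin (t + 2) → S) i ∈ W then
            (pathProb Q s (Fin.snoc pa x)).toReal * f ((Fin.snoc pa x : Fin (t+2) → S) (Fin.last (t+1))) else 0)
            = (pathProb Q s pa).toReal * (if x ∈ W then (qr Q (pa (Fin.last t)) x * f x) else 0) := by
          intro x
          rw [show ((Fin.snoc pa x : Fin (t+2) → S) (Fin.last (t+1))) = x from Fin.snoc_last _ _]
          by_cases hx : x ∈ W
          · rw [if_pos ((forall_snoc_mem pa x W).2 ⟨hpa, hx⟩), if_pos hx,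
              pathProb_snoc, ENNReal.toReal_mul]
            unfold qr; ring
          · rw [if_neg (by rw [forall_snoc_mem]; tauto), if_neg hx, mul_zero]
        rw [Finset.sum_congr rfl (fun x _ => h1 x), ← Finset.mul_sum]
        congr 1
        rw [Finset.sum_ite_mem, Finset.univ_inter]
        unfold opW
        rw [if_pos (hpa (Fin.last t))]
      · rw [if_neg hpa]
        apply Finset.sum_eq_zero
        intro x _
        rw [if_neg (by rw [forall_snoc_mem]; tauto)]
    rw [Finset.sum_congr rfl (fun pa _ => hterm pa), ih, Function.iterate_succ_apply]

section OPS

variable {S : Type*} [Fintype S] [DecidableEq S]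
variable (q : S → S → ℝ) (W : Finset S)

lemma opW_nonneg (hq0 : ∀ x y, 0 ≤ q x y) {f : S → ℝ} (hf : ∀ y ∈ W, 0 ≤ f y) (x : S) :
    0 ≤ opW q W f x := by
  unfold opW; split
  · exact Finset.sum_nonneg fun y hy => mul_nonneg (hq0 x y) (hf y hy)
  · exact le_refl 0

lemma opW_mono (hq0 : ∀ x y, 0 ≤ q x y) {f g : S → ℝ} (h : ∀ y ∈ W, f y ≤ g y) (x : S) :
    opW q W f x ≤ opW q W g x := by
  unfold opW; split
  · exact Finset.sum_le_sum fun y hy => mul_le_mul_of_nonneg_left (h y hy) (hq0 x y)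
  · exact le_refl 0

lemma opW_iter_mono (hq0 : ∀ x y, 0 ≤ q x y) {f g : S → ℝ} (h : ∀ y ∈ W, f y ≤ g y) :
    ∀ k, ∀ y ∈ W, (opW q W)^[k] f y ≤ (opW q W)^[k] g y := by
  intro k
  induction k generalizing f g with
  | zero => intro y hy; exact h y hy
  | succ k ih =>
    intro y hy
    rw [Function.iterate_succ_apply, Function.iterate_succ_apply]
    exact ih (fun z hz => opW_mono q W hq0 h z) y hy

lemma opW_iter_nonneg (hq0 : ∀ x y, 0 ≤ q x y) {f : S → ℝ} (hf : ∀ y ∈ W, 0 ≤ f y) :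
    ∀ k, ∀ y ∈ W, 0 ≤ (opW q W)^[k] f y := by
  intro k
  induction k generalizing f with
  | zero => exact hf
  | succ k ih =>
    intro y hy
    rw [Function.iterate_succ_apply]
    exact ih (fun z hz => opW_nonneg q W hq0 hf z) y hy

lemma opW_sub_stochastic (hq0 : ∀ x y, 0 ≤ q x y) (hq1 : ∀ x, ∑ y, q x y = 1) (x : S) :
    ∑ y ∈ W, q x y ≤ 1 := by
  rw [← hq1 x]
  exact Finset.sum_le_sum_of_subset_of_nonneg (Finset.subset_univ W)
    (fun y _ _ => hq0 x y)

lemma opW_le_one (hq0 : ∀ x y, 0 ≤ q x y) (hq1 : ∀ x, ∑ y, q x y = 1)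
    {f : S → ℝ} (hf : ∀ y ∈ W, f y ≤ 1) (x : S) : opW q W f x ≤ 1 := by
  unfold opW; split
  · calc ∑ y ∈ W, q x y * f y ≤ ∑ y ∈ W, q x y := by
          refine Finset.sum_le_sum fun y hy => ?_
          calc q x y * f y ≤ q x y * 1 := by
                by_cases h0 : 0 ≤ f y
                · exact mul_le_mul_of_nonneg_left (hf y hy) (hq0 x y)
                · nlinarith [hq0 x y, hf y hy]
            _ = q x y := mul_one _
      _ ≤ 1 := opW_sub_stochastic q W hq0 hq1 x
  · exact zero_le_one

lemma opW_iter_le_one (hq0 : ∀ x y, 0 ≤ q x y) (hq1 : ∀ x, ∑ y, q x y = 1)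
    {f : S → ℝ} (hf : ∀ y ∈ W, f y ≤ 1) :
    ∀ k, ∀ y ∈ W, (opW q W)^[k] f y ≤ 1 := by
  intro k
  induction k generalizing f with
  | zero => exact hf
  | succ k ih =>
    intro y hy
    rw [Function.iterate_succ_apply]
    exact ih (fun z hz => opW_le_one q W hq0 hq1 hf z) y hy

lemma opW_add (f g : S → ℝ) :
    opW q W (fun y => f y + g y) = fun x => opW q W f x + opW q W g x := by
  funext x
  unfold opW; split
  · rw [← Finset.sum_add_distrib]
    exact Finset.sum_congr rfl fun y _ => by ring
  · ring

lemma opW_iter_add (f g : S → ℝ) (k : ℕ) :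
    (opW q W)^[k] (fun y => f y + g y) = fun x => (opW q W)^[k] f x + (opW q W)^[k] g x := by
  induction k generalizing f g with
  | zero => rfl
  | succ k ih =>
    rw [Function.iterate_succ_apply, Function.iterate_succ_apply, Function.iterate_succ_apply,
      opW_add]
    exact ih _ _

lemma opW_smul (c : ℝ) (f : S → ℝ) :
    opW q W (fun y => c * f y) = fun x => c * opW q W f x := by
  funext x
  unfold opW; split
  · rw [Finset.mul_sum]
    exact Finset.sum_congr rfl fun y _ => by ring
  · ring

lemma opW_iter_smul (c : ℝ) (f : S → ℝ) (k : ℕ) :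
    (opW q W)^[k] (fun y => c * f y) = fun x => c * (opW q W)^[k] f x := by
  induction k generalizing f with
  | zero => rfl
  | succ k ih =>
    rw [Function.iterate_succ_apply, Function.iterate_succ_apply, opW_smul]
    exact ih _

lemma opW_sub (f g : S → ℝ) :
    opW q W (fun y => f y - g y) = fun x => opW q W f x - opW q W g x := by
  funext x
  unfold opW; split
  · rw [← Finset.sum_sub_distrib]
    exact Finset.sum_congr rfl fun y _ => by ring
  · ring

lemma opW_iter_sub (f g : S → ℝ) (k : ℕ) :
    (opW q W)^[k] (fun y => f y - g y) = fun x => (opW q W)^[k] f x - (opW q W)^[k] g x := by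
  induction k generalizing f g with
  | zero => rfl
  | succ k ih =>
    rw [Function.iterate_succ_apply, Function.iterate_succ_apply, Function.iterate_succ_apply,
      opW_sub]
    exact ih _ _

lemma opW_congr {f g : S → ℝ} (h : ∀ y ∈ W, f y = g y) (x : S) :
    opW q W f x = opW q W g x := by
  unfold opW; split
  · exact Finset.sum_congr rfl fun y hy => by rw [h y hy]
  · rfl

lemma opW_iter_congr {f g : S → ℝ} (h : ∀ y ∈ W, f y = g y) :
    ∀ k, ∀ y ∈ W, (opW q W)^[k] f y = (opW q W)^[k] g y := by
  intro k
  induction k generalizing f g with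
  | zero => exact h
  | succ k ih =>
    intro y hy
    rw [Function.iterate_succ_apply, Function.iterate_succ_apply]
    exact ih (fun z _ => opW_congr q W h z) y hy

lemma opW_univ_one (hq1 : ∀ x, ∑ y, q x y = 1) (k : ℕ) (x : S) :
    (opW q Finset.univ)^[k] (fun _ => 1) x = 1 := by
  induction k generalizing x with
  | zero => rfl
  | succ k ih =>
    rw [Function.iterate_succ_apply']
    unfold opW
    rw [if_pos (Finset.mem_univ x)]
    calc ∑ y, q x y * (opW q Finset.univ)^[k] (fun _ => 1) y
        = ∑ y, q x y := Finset.sum_congr rfl fun y _ => by rw [ih]; ring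
      _ = 1 := hq1 x

lemma opW_iter_one_le (hq0 : ∀ x y, 0 ≤ q x y) (hq1 : ∀ x, ∑ y, q x y = 1) (k : ℕ)
    (y : S) (hy : y ∈ W) : (opW q W)^[k] (fun _ => 1) y ≤ 1 :=
  opW_iter_le_one q W hq0 hq1 (fun _ _ => le_refl 1) k y hy

end OPS
section BRIDGE

variable {S : Type*} [Fintype S] [DecidableEq S]

lemma Q_le_one {Q : S → S → ℝ≥0∞} (hQ : ∀ x, ∑ y, Q x y = 1) (x y : S) : Q x y ≤ 1 := by
  rw [← hQ x]
  exact Finset.single_le_sum (fun _ _ => zero_le) (Finset.mem_univ y)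

lemma pathProb_le_one {Q : S → S → ℝ≥0∞} (hQ : ∀ x, ∑ y, Q x y = 1) (s : S) {t : ℕ}
    (path : Fin (t + 1) → S) : pathProb Q s path ≤ 1 := by
  unfold pathProb
  calc (if path 0 = s then (1:ℝ≥0∞) else 0) * ∏ i : Fin t, Q (path i.castSucc) (path i.succ)
      ≤ 1 * 1 := by
        refine mul_le_mul' ?_ ?_
        · split <;> simp
        · exact Finset.prod_le_one (fun _ _ => zero_le) (fun i _ => Q_le_one hQ _ _)
    _ = 1 := one_mul 1

lemma pathProb_ne_top {Q : S → S → ℝ≥0∞} (hQ : ∀ x, ∑ y, Q x y = 1) (s : S) {t : ℕ}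
    (path : Fin (t + 1) → S) : pathProb Q s path ≠ ⊤ :=
  ne_top_of_le_ne_top ENNReal.one_ne_top (pathProb_le_one hQ s path)

lemma qr_nonneg (Q : S → S → ℝ≥0∞) (x y : S) : 0 ≤ qr Q x y := ENNReal.toReal_nonneg

lemma qr_sum_one {Q : S → S → ℝ≥0∞} (hQ : ∀ x, ∑ y, Q x y = 1) (x : S) :
    ∑ y, qr Q x y = 1 := by
  unfold qr
  rw [← ENNReal.toReal_sum (fun y _ => ne_top_of_le_ne_top ENNReal.one_ne_top (Q_le_one hQ x y)),
    hQ x, ENNReal.toReal_one]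

lemma mem_compl_singleton (s s' : S) : s ∈ ({s'}ᶜ : Finset S) ↔ s ≠ s' := by
  simp

/-- Bridge for the hitting cost. -/
lemma hitCostE_eq {Q : S → S → ℝ≥0∞} (hQ : ∀ x, ∑ y, Q x y = 1) (c : S → ℝ)
    (hc : ∀ x, 0 ≤ c x) (s s' : S) :
    hitCostE Q (fun x => ENNReal.ofReal (c x)) s s'
      = ∑' t : ℕ, ENNReal.ofReal
          (if s ∈ ({s'}ᶜ : Finset S) then (opW (qr Q) ({s'}ᶜ))^[t] c s else 0) := by
  unfold hitCostE
  refine tsum_congr fun t => ?_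
  rw [← sum_path_eq Q ({s'}ᶜ) c s t]
  have hterm : ∀ path : Fin (t + 1) → S,
      (if ∀ i, path i ≠ s' then pathProb Q s path * ENNReal.ofReal (c (path (Fin.last t))) else 0)
      = ENNReal.ofReal (if ∀ i, path i ∈ ({s'}ᶜ : Finset S) then
          (pathProb Q s path).toReal * c (path (Fin.last t)) else 0) := by
    intro path
    have hcond : (∀ i, path i ≠ s') ↔ (∀ i, path i ∈ ({s'}ᶜ : Finset S)) := by
      simp
    by_cases h : ∀ i, path i ≠ s'
    · rw [if_pos h, if_pos (hcond.1 h), ENNReal.ofReal_mul ENNReal.toReal_nonneg,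
        ENNReal.ofReal_toReal (pathProb_ne_top hQ s path)]
    · rw [if_neg h, if_neg (fun hh => h (hcond.2 hh)), ENNReal.ofReal_zero]
  rw [Finset.sum_congr rfl (fun path _ => hterm path)]
  rw [← ENNReal.ofReal_sum_of_nonneg]
  intro path _
  split
  · exact mul_nonneg ENNReal.toReal_nonneg (hc _)
  · exact le_refl 0

/-- Summability of the cost sequence when the hitting cost is finite. -/
lemma summable_cost {Q : S → S → ℝ≥0∞} (hQ : ∀ x, ∑ y, Q x y = 1) (c : S → ℝ)
    (hc : ∀ x, 0 ≤ c x) (s s' : S) (hs : s ≠ s')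
    (hfin : hitCostE Q (fun x => ENNReal.ofReal (c x)) s s' ≠ ⊤) :
    Summable (fun t : ℕ => (opW (qr Q) ({s'}ᶜ))^[t] c s)
    ∧ ∑' t : ℕ, (opW (qr Q) ({s'}ᶜ))^[t] c s
        = (hitCostE Q (fun x => ENNReal.ofReal (c x)) s s').toReal := by
  set a : ℕ → ℝ := fun t => (opW (qr Q) ({s'}ᶜ))^[t] c s with ha
  have hsW : s ∈ ({s'}ᶜ : Finset S) := (mem_compl_singleton s s').2 hs
  have hnn : ∀ t, 0 ≤ a t := fun t =>
    opW_iter_nonneg (qr Q) ({s'}ᶜ) (qr_nonneg Q) (fun y _ => hc y) t s hsW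
  have heq : hitCostE Q (fun x => ENNReal.ofReal (c x)) s s' = ∑' t, ENNReal.ofReal (a t) := by
    rw [hitCostE_eq hQ c hc s s']
    exact tsum_congr fun t => by rw [if_pos hsW]
  have hle : ∀ N : ℕ, ∑ t ∈ Finset.range N, a t
      ≤ (hitCostE Q (fun x => ENNReal.ofReal (c x)) s s').toReal := by
    intro N
    rw [← ENNReal.ofReal_le_iff_le_toReal hfin, heq,
      ENNReal.ofReal_sum_of_nonneg (fun t _ => hnn t)]
    exact ENNReal.summable.sum_le_tsum (Finset.range N) (fun t _ => zero_le)
  have hsum : Summable a := summable_of_sum_range_le hnn hle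
  refine ⟨hsum, ?_⟩
  rw [heq, ← ENNReal.ofReal_tsum_of_nonneg hnn hsum,
    ENNReal.toReal_ofReal (tsum_nonneg hnn)]

lemma hitCostE_self (Q : S → S → ℝ≥0∞) (c : S → ℝ≥0∞) (s : S) :
    hitCostE Q c s s = 0 := by
  unfold hitCostE
  refine ENNReal.summable.tsum_eq_zero_iff.2 fun t => Finset.sum_eq_zero fun path _ => ?_
  split
  · rename_i h
    unfold pathProb
    rw [if_neg (h 0), zero_mul, zero_mul]
  · rfl

end BRIDGE
section LEMA

open Filter Finset

variable {S : Type*} [Fintype S] [DecidableEq S]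

open Classical in
/-- The zero-cost region avoiding `s'`. -/
def Zf (c : S → ℝ) (s' : S) : Finset S := Finset.univ.filter (fun x => x ≠ s' ∧ c x = 0)

/-- Probability of staying inside the zero-cost region for `k` steps. -/
def vseq (Q : S → S → ℝ≥0∞) (c : S → ℝ) (s' : S) (k : ℕ) : S → ℝ :=
  fun z => if z ∈ Zf c s' then (opW (qr Q) (Zf c s'))^[k] (fun _ => 1) z else 0

variable {Q : S → S → ℝ≥0∞} {c : S → ℝ} {s' : S}

lemma vseq_rec (k : ℕ) (z : S) :
    vseq Q c s' (k + 1) z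
      = if z ∈ Zf c s' then ∑ y ∈ Zf c s', qr Q z y * vseq Q c s' k y else 0 := by
  unfold vseq
  by_cases hz : z ∈ Zf c s'
  · rw [if_pos hz, if_pos hz, Function.iterate_succ_apply']
    unfold opW
    rw [if_pos hz]
    refine Finset.sum_congr rfl fun y hy => ?_
    rw [if_pos hy]
  · rw [if_neg hz, if_neg hz]

lemma vseq_nonneg (hQ : ∀ x, ∑ y, Q x y = 1) (k : ℕ) (z : S) : 0 ≤ vseq Q c s' k z := by
  unfold vseq; split
  · exact opW_iter_nonneg _ _ (qr_nonneg Q) (fun _ _ => zero_le_one) k z ‹_›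
  · exact le_refl 0

lemma vseq_le_one (hQ : ∀ x, ∑ y, Q x y = 1) (k : ℕ) (z : S) : vseq Q c s' k z ≤ 1 := by
  unfold vseq; split
  · exact opW_iter_le_one _ _ (qr_nonneg Q) (qr_sum_one hQ) (fun _ _ => le_refl 1) k z ‹_›
  · exact zero_le_one

lemma vseq_antitone (hQ : ∀ x, ∑ y, Q x y = 1) (z : S) :
    Antitone (fun k => vseq Q c s' k z) := by
  apply antitone_nat_of_succ_le
  intro k
  unfold vseq
  by_cases hz : z ∈ Zf c s'
  · rw [if_pos hz, if_pos hz, Function.iterate_succ_apply]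
    exact opW_iter_mono _ _ (qr_nonneg Q)
      (fun y hy => opW_le_one _ _ (qr_nonneg Q) (qr_sum_one hQ) (fun _ _ => le_refl 1) y) k z hz
  · rw [if_neg hz, if_neg hz]

lemma opW_sum (q : S → S → ℝ) (W : Finset S) {ι : Type*} (I : Finset ι) (F : ι → S → ℝ) :
    opW q W (fun y => ∑ i ∈ I, F i y) = fun x => ∑ i ∈ I, opW q W (F i) x := by
  funext x
  unfold opW; split
  · rw [Finset.sum_comm]
    · exact Finset.sum_congr rfl fun y _ => Finset.mul_sum _ _ _
  · rw [Finset.sum_const, smul_zero]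

lemma opW_iter_sum (q : S → S → ℝ) (W : Finset S) {ι : Type*} (I : Finset ι) (F : ι → S → ℝ)
    (k : ℕ) :
    (opW q W)^[k] (fun y => ∑ i ∈ I, F i y) = fun x => ∑ i ∈ I, (opW q W)^[k] (F i) x := by
  induction k generalizing F with
  | zero => rfl
  | succ k ih =>
    rw [Function.iterate_succ_apply, opW_sum]
    rw [show (fun x => ∑ i ∈ I, opW q W (F i) x) = (fun y => ∑ i ∈ I, (fun j => opW q W (F j)) i y) from rfl]
    rw [ih]
    funext x
    exact Finset.sum_congr rfl fun i _ => by rw [Function.iterate_succ_apply]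

/-- LEMMA A: if the expected hitting cost is finite and there is no zero-cost trap,
the survival probability tends to zero. -/
lemma lemA [Nonempty S] (hQ : ∀ x, ∑ y, Q x y = 1)
    (hc : ∀ x, 0 ≤ c x) (s : S) (hs : s ≠ s')
    (hsum : Summable (fun t : ℕ => (opW (qr Q) ({s'}ᶜ))^[t] c s))
    (htrap : ∀ z, z ≠ s' → c z = 0 → ¬ (∀ k, vseq Q c s' k z = 1)) :
    Tendsto (fun t : ℕ => (opW (qr Q) ({s'}ᶜ))^[t] (fun _ => (1:ℝ)) s) atTop (nhds 0) := by
  classical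
  set W : Finset S := ({s'}ᶜ : Finset S) with hW
  set T : (S → ℝ) → (S → ℝ) := opW (qr Q) W with hT
  have hsW : s ∈ W := (mem_compl_singleton s s').2 hs
  have hZW : Zf c s' ⊆ W := by
    intro x hx
    rw [Zf, Finset.mem_filter] at hx
    exact (mem_compl_singleton x s').2 hx.2.1
  set u : ℕ → S → ℝ := fun k => T^[k] (fun _ => (1:ℝ)) with hu
  have hone : ∀ y ∈ W, (fun _ => (1:ℝ)) y ≤ 1 := fun _ _ => le_refl 1
  have hu_le_one : ∀ k, ∀ x ∈ W, u k x ≤ 1 := fun k =>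
    opW_iter_le_one _ _ (qr_nonneg Q) (qr_sum_one hQ) hone k
  have hu_nonneg : ∀ k, ∀ x ∈ W, 0 ≤ u k x := fun k =>
    opW_iter_nonneg _ _ (qr_nonneg Q) (fun _ _ => zero_le_one) k
  have hu_anti : Antitone (fun k => u k s) := by
    apply antitone_nat_of_succ_le
    intro k
    show T^[k+1] (fun _ => (1:ℝ)) s ≤ T^[k] (fun _ => (1:ℝ)) s
    rw [Function.iterate_succ_apply]
    exact opW_iter_mono _ _ (qr_nonneg Q)
      (fun y hy => opW_le_one _ _ (qr_nonneg Q) (qr_sum_one hQ) hone y) k s hsW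
  have hbdd : BddBelow (Set.range fun k => u k s) := ⟨0, by
    rintro x ⟨k, rfl⟩; exact hu_nonneg k s hsW⟩
  set δ : ℝ := ⨅ k, u k s with hδ
  have htendδ : Tendsto (fun k => u k s) atTop (nhds δ) := tendsto_atTop_ciInf hu_anti hbdd
  have hδ0 : 0 ≤ δ := le_ciInf fun k => hu_nonneg k s hsW
  rcases eq_or_lt_of_le hδ0 with hδeq | hδpos
  · rwa [← hδeq] at htendδ
  exfalso
  -- the comparison function d
  set d : S → ℝ := fun x => if x ∈ W \ Zf c s' then 1 else 0 with hd
  have hd_nonneg : ∀ x, 0 ≤ d x := by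
    intro x; rw [hd]; dsimp only; split <;> norm_num
  -- comparison inequality
  have hcomp : ∀ k, ∀ x ∈ W,
      u k x ≤ vseq Q c s' k x + ∑ j ∈ Finset.range (k + 1), T^[j] d x := by
    intro k
    induction k with
    | zero =>
      intro x hxW
      have hsum1 : ∑ j ∈ Finset.range (0 + 1), T^[j] d x = d x := by
        rw [zero_add, Finset.sum_range_one]
        rfl
      rw [hsum1]
      by_cases hxZ : x ∈ Zf c s'
      · have : vseq Q c s' 0 x = 1 := by unfold vseq; rw [if_pos hxZ]; rfl
        rw [this]
        have hdx : (0:ℝ) ≤ d x := hd_nonneg x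
        have hu0 : u 0 x = 1 := rfl
        rw [hu0]
        linarith
      · have h1 : vseq Q c s' 0 x = 0 := by unfold vseq; rw [if_neg hxZ]
        have h2 : d x = 1 := by rw [hd]; dsimp only; rw [if_pos (Finset.mem_sdiff.2 ⟨hxW, hxZ⟩)]
        have hu0 : u 0 x = 1 := rfl
        rw [h1, h2, hu0]; norm_num
    | succ k ih =>
      intro x hxW
      have hstep : u (k + 1) x = T (u k) x :=
        congrFun (Function.iterate_succ_apply' T k _) x
      rw [hstep]
      have h1 : T (u k) x ≤ T (fun y => vseq Q c s' k y + ∑ j ∈ Finset.range (k+1), T^[j] d y) x :=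
        opW_mono _ _ (qr_nonneg Q) ih x
      have h2 : T (fun y => vseq Q c s' k y + ∑ j ∈ Finset.range (k+1), T^[j] d y) x
          = T (vseq Q c s' k) x + ∑ j ∈ Finset.range (k+1), T^[j+1] d x := by
        have e1 : T (fun y => vseq Q c s' k y + ∑ j ∈ Finset.range (k+1), T^[j] d y) x
            = T (vseq Q c s' k) x + T (fun y => ∑ j ∈ Finset.range (k+1), T^[j] d y) x :=
          congrFun (opW_add (qr Q) W (vseq Q c s' k)
            (fun y => ∑ j ∈ Finset.range (k+1), T^[j] d y)) x
        have e2 : T (fun y => ∑ j ∈ Finset.range (k+1), T^[j] d y) x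
            = ∑ j ∈ Finset.range (k+1), T (T^[j] d) x :=
          congrFun (opW_sum (qr Q) W (Finset.range (k+1)) (fun j => T^[j] d)) x
        have e3 : ∀ j, T (T^[j] d) x = T^[j+1] d x := fun j =>
          (congrFun (Function.iterate_succ_apply' T j d) x).symm
        rw [e1, e2, Finset.sum_congr rfl (fun j _ => e3 j)]
      have h3 : T (vseq Q c s' k) x ≤ vseq Q c s' (k + 1) x + d x := by
        by_cases hxZ : x ∈ Zf c s'
        · have hTv : T (vseq Q c s' k) x = ∑ y ∈ Zf c s', qr Q x y * vseq Q c s' k y := by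
            rw [hT]; unfold opW
            rw [if_pos hxW]
            rw [← Finset.sum_subset hZW]
            intro y hyW hyZ
            have : vseq Q c s' k y = 0 := by unfold vseq; rw [if_neg hyZ]
            rw [this, mul_zero]
          rw [hTv, vseq_rec, if_pos hxZ]
          have := hd_nonneg x
          linarith
        · have hv0 : vseq Q c s' (k + 1) x = 0 := by rw [vseq_rec, if_neg hxZ]
          have hdx : d x = 1 := by rw [hd]; dsimp only; rw [if_pos (Finset.mem_sdiff.2 ⟨hxW, hxZ⟩)]
          have : T (vseq Q c s' k) x ≤ 1 :=
            opW_le_one _ _ (qr_nonneg Q) (qr_sum_one hQ) (fun y _ => vseq_le_one hQ k y) x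
          rw [hv0, hdx]; linarith
      have h4 : ∑ j ∈ Finset.range (k + 2), T^[j] d x
          = d x + ∑ j ∈ Finset.range (k+1), T^[j+1] d x := by
        rw [Finset.sum_range_succ']
        rw [add_comm]
        rfl
      calc T (u k) x ≤ T (vseq Q c s' k) x + ∑ j ∈ Finset.range (k+1), T^[j+1] d x := by
            rw [← h2]; exact h1
        _ ≤ vseq Q c s' (k + 1) x + d x + ∑ j ∈ Finset.range (k+1), T^[j+1] d x := by linarith
        _ = vseq Q c s' (k + 1) x + ∑ j ∈ Finset.range (k + 2), T^[j] d x := by rw [h4]; ring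
  -- epsilon
  set P : Finset S := W \ Zf c s' with hP
  set ε0 : ℝ := if h : P.Nonempty then P.inf' h c else 1 with hε0
  have hε0pos : 0 < ε0 := by
    rw [hε0]
    split
    · rename_i h
      rw [Finset.lt_inf'_iff]
      intro x hx
      rw [hP, Finset.mem_sdiff] at hx
      rcases hx with ⟨hxW, hxZ⟩
      have hxs : x ≠ s' := (mem_compl_singleton x s').1 hxW
      have : ¬ (c x = 0) := by
        intro h0
        exact hxZ (by rw [Zf, Finset.mem_filter]; exact ⟨Finset.mem_univ x, hxs, h0⟩)
      exact lt_of_le_of_ne (hc x) (Ne.symm this)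
    · norm_num
  have hd_le : ∀ y ∈ W, d y ≤ ε0⁻¹ * c y := by
    intro y hyW
    by_cases hyZ : y ∈ Zf c s'
    · have : d y = 0 := by
        rw [hd]; dsimp only
        rw [if_neg (fun hmem => (Finset.mem_sdiff.1 hmem).2 hyZ)]
      rw [this]
      exact mul_nonneg (inv_nonneg.2 hε0pos.le) (hc y)
    · have hdy : d y = 1 := by rw [hd]; dsimp only; rw [if_pos (Finset.mem_sdiff.2 ⟨hyW, hyZ⟩)]
      have hcy : ε0 ≤ c y := by
        have hyP : y ∈ P := Finset.mem_sdiff.2 ⟨hyW, hyZ⟩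
        rw [hε0]
        rw [dif_pos ⟨y, hyP⟩]
        exact Finset.inf'_le c hyP
      rw [hdy]
      calc (1:ℝ) = ε0⁻¹ * ε0 := (inv_mul_cancel₀ hε0pos.ne').symm
        _ ≤ ε0⁻¹ * c y := mul_le_mul_of_nonneg_left hcy (inv_nonneg.2 hε0pos.le)
  set D : ℕ → ℝ := fun j => T^[j] d s with hD
  have hD_nonneg : ∀ j, 0 ≤ D j := fun j =>
    opW_iter_nonneg _ _ (qr_nonneg Q) (fun y _ => hd_nonneg y) j s hsW
  have hD_le : ∀ j, D j ≤ ε0⁻¹ * (T^[j] c s) := by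
    intro j
    have h1 : T^[j] d s ≤ T^[j] (fun y => ε0⁻¹ * c y) s :=
      opW_iter_mono _ _ (qr_nonneg Q) hd_le j s hsW
    have h2 : T^[j] (fun y => ε0⁻¹ * c y) s = ε0⁻¹ * T^[j] c s := by
      rw [hT, opW_iter_smul]
    rw [hD]; dsimp only
    rw [← h2]; exact h1
  have hDsum : Summable D :=
    Summable.of_nonneg_of_le hD_nonneg hD_le (hsum.mul_left ε0⁻¹)
  -- choose T0 with small tail
  set SD : ℝ := ∑' j, D j with hSD
  have hptsum : Tendsto (fun n => ∑ j ∈ Finset.range n, D j) atTop (nhds SD) :=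
    hDsum.hasSum.tendsto_sum_nat
  have hev : ∀ᶠ n in atTop, SD - δ/2 < ∑ j ∈ Finset.range n, D j := by
    apply hptsum.eventually_const_lt
    linarith
  obtain ⟨T0, hT0⟩ := hev.exists
  have htail : ∀ m, T0 ≤ m → ∑ j ∈ Finset.Ico T0 m, D j ≤ δ / 2 := by
    intro m hm
    have h1 : ∑ j ∈ Finset.Ico T0 m, D j = ∑ j ∈ Finset.range m, D j - ∑ j ∈ Finset.range T0, D j := by
      rw [Finset.sum_Ico_eq_sub _ hm]
    have h2 : ∑ j ∈ Finset.range m, D j ≤ SD :=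
      hDsum.sum_le_tsum (Finset.range m) (fun j _ => hD_nonneg j)
    rw [h1]
    linarith
  -- supremum of vseq
  have hne : (Finset.univ : Finset S).Nonempty := Finset.univ_nonempty
  set Mk : ℕ → ℝ := fun k => Finset.univ.sup' hne (vseq Q c s' k) with hMk
  have hMk_ge : ∀ k, δ / 2 ≤ Mk k := by
    intro k
    have hδle : δ ≤ u (T0 + k) s := ciInf_le hbdd (T0 + k)
    have hdecomp : u (T0 + k) s = T^[T0] (u k) s :=
      congrFun (Function.iterate_add_apply T T0 k _) s
    have hub : T^[T0] (u k) s
        ≤ T^[T0] (fun y => vseq Q c s' k y + ∑ j ∈ Finset.range (k+1), T^[j] d y) s :=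
      opW_iter_mono _ _ (qr_nonneg Q) (hcomp k) T0 s hsW
    have hsplit : T^[T0] (fun y => vseq Q c s' k y + ∑ j ∈ Finset.range (k+1), T^[j] d y) s
        = T^[T0] (vseq Q c s' k) s + ∑ j ∈ Finset.range (k+1), T^[T0 + j] d s := by
      have e1 : T^[T0] (fun y => vseq Q c s' k y + ∑ j ∈ Finset.range (k+1), T^[j] d y) s
          = T^[T0] (vseq Q c s' k) s + T^[T0] (fun y => ∑ j ∈ Finset.range (k+1), T^[j] d y) s :=
        congrFun (opW_iter_add (qr Q) W (vseq Q c s' k)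
          (fun y => ∑ j ∈ Finset.range (k+1), T^[j] d y) T0) s
      have e2 : T^[T0] (fun y => ∑ j ∈ Finset.range (k+1), T^[j] d y) s
          = ∑ j ∈ Finset.range (k+1), T^[T0] (T^[j] d) s :=
        congrFun (opW_iter_sum (qr Q) W (Finset.range (k+1)) (fun j => T^[j] d) T0) s
      have e3 : ∀ j, T^[T0] (T^[j] d) s = T^[T0 + j] d s := fun j =>
        (congrFun (Function.iterate_add_apply T T0 j d) s).symm
      rw [e1, e2, Finset.sum_congr rfl (fun j _ => e3 j)]
    have hb1 : T^[T0] (vseq Q c s' k) s ≤ Mk k := by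
      have hMk_nonneg : 0 ≤ Mk k := by
        obtain ⟨y⟩ := ‹Nonempty S›
        exact le_trans (vseq_nonneg hQ k y) (Finset.le_sup' _ (Finset.mem_univ y))
      have h1 : T^[T0] (vseq Q c s' k) s ≤ T^[T0] (fun y => Mk k * 1) s :=
        opW_iter_mono _ _ (qr_nonneg Q)
          (fun y _ => by
            rw [mul_one]
            exact Finset.le_sup' _ (Finset.mem_univ y)) T0 s hsW
      have h2 : T^[T0] (fun y => Mk k * (fun _ => (1:ℝ)) y) s = Mk k * u T0 s := by
        rw [hT, opW_iter_smul]
      calc T^[T0] (vseq Q c s' k) s ≤ Mk k * u T0 s := by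
            rw [← h2]; exact h1
        _ ≤ Mk k * 1 := mul_le_mul_of_nonneg_left (hu_le_one T0 s hsW) hMk_nonneg
        _ = Mk k := mul_one _
    have hb2 : ∑ j ∈ Finset.range (k+1), T^[T0 + j] d s ≤ δ / 2 := by
      have : ∑ j ∈ Finset.range (k+1), T^[T0 + j] d s = ∑ j ∈ Finset.Ico T0 (T0 + (k+1)), D j := by
        rw [Finset.sum_Ico_eq_sum_range]
        simp only [add_tsub_cancel_left]
        rfl
      rw [this]
      exact htail _ (Nat.le_add_right _ _)
    linarith
  -- pigeonhole: a state attaining the sup infinitely often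
  have hzk : ∀ k, ∃ z, vseq Q c s' k z = Mk k := by
    intro k
    obtain ⟨z, _, hz⟩ := Finset.exists_mem_eq_sup' hne (vseq Q c s' k)
    exact ⟨z, hz.symm⟩
  choose zk hzk using hzk
  obtain ⟨z, hzinf⟩ := Finite.exists_infinite_fiber zk
  have hzinf' : (zk ⁻¹' {z}).Infinite := Set.infinite_coe_iff.1 hzinf
  have hvz : ∀ k, δ / 2 ≤ vseq Q c s' k z := by
    intro k
    obtain ⟨k', hk'mem, hk'⟩ := hzinf'.exists_gt k
    have : vseq Q c s' k' z = Mk k' := by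
      have : zk k' = z := hk'mem
      rw [← this]; exact hzk k'
    calc δ / 2 ≤ Mk k' := hMk_ge k'
      _ = vseq Q c s' k' z := this.symm
      _ ≤ vseq Q c s' k z := vseq_antitone hQ z hk'.le
  -- the limit function w
  have hbddv : ∀ y, BddBelow (Set.range fun k => vseq Q c s' k y) := by
    intro y
    exact ⟨0, by rintro x ⟨k, rfl⟩; exact vseq_nonneg hQ k y⟩
  set w : S → ℝ := fun y => ⨅ k, vseq Q c s' k y with hw
  have htendw : ∀ y, Tendsto (fun k => vseq Q c s' k y) atTop (nhds (w y)) :=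
    fun y => tendsto_atTop_ciInf (vseq_antitone hQ y) (hbddv y)
  have hw_le : ∀ y, w y ≤ 1 := fun y =>
    le_trans (ciInf_le (hbddv y) 0) (vseq_le_one hQ 0 y)
  have hw_nonneg : ∀ y, 0 ≤ w y := fun y => le_ciInf fun k => vseq_nonneg hQ k y
  have hw_rec : ∀ z', w z' = if z' ∈ Zf c s' then ∑ y ∈ Zf c s', qr Q z' y * w y else 0 := by
    intro z'
    by_cases hz' : z' ∈ Zf c s'
    · rw [if_pos hz']
      have h1 : Tendsto (fun k => vseq Q c s' (k+1) z') atTop (nhds (w z')) :=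
        (htendw z').comp (tendsto_add_atTop_nat 1)
      have h2 : Tendsto (fun k => ∑ y ∈ Zf c s', qr Q z' y * vseq Q c s' k y) atTop
          (nhds (∑ y ∈ Zf c s', qr Q z' y * w y)) := by
        apply tendsto_finset_sum
        intro y _
        exact (htendw y).const_mul _
      have h3 : (fun k => vseq Q c s' (k+1) z')
          = fun k => ∑ y ∈ Zf c s', qr Q z' y * vseq Q c s' k y := by
        funext k
        rw [vseq_rec, if_pos hz']
      rw [h3] at h1
      exact tendsto_nhds_unique h1 h2
    · rw [if_neg hz']
      have : ∀ k, vseq Q c s' k z' = 0 := fun k => by unfold vseq; rw [if_neg hz']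
      show (⨅ k, vseq Q c s' k z') = 0
      rw [show (fun k => vseq Q c s' k z') = (fun _ : ℕ => (0:ℝ)) from funext this]
      exact ciInf_const
  have hwz : δ / 2 ≤ w z := le_ciInf hvz
  -- the max of w
  set m : ℝ := Finset.univ.sup' hne w with hm
  obtain ⟨zst, _, hzst⟩ := Finset.exists_mem_eq_sup' hne w
  have hmw : ∀ y, w y ≤ m := fun y => Finset.le_sup' _ (Finset.mem_univ y)
  have hmpos : 0 < m := lt_of_lt_of_le (by linarith) (le_trans hwz (hmw z))
  -- states in U
  set U : Finset S := (Zf c s').filter (fun y => w y = m) with hU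
  have hUsub : U ⊆ Zf c s' := Finset.filter_subset _ _
  have hUq : ∀ z0 ∈ U, ∑ y ∈ U, qr Q z0 y = 1 := by
    intro z0 hz0
    rw [hU, Finset.mem_filter] at hz0
    obtain ⟨hz0Z, hz0w⟩ := hz0
    have hrec : m = ∑ y ∈ Zf c s', qr Q z0 y * w y := by
      rw [← hz0w, hw_rec z0, if_pos hz0Z]
    set σ : ℝ := ∑ y ∈ Zf c s', qr Q z0 y with hσ
    have hσle : σ ≤ 1 := opW_sub_stochastic _ _ (qr_nonneg Q) (qr_sum_one hQ) z0
    have hmσ : m ≤ σ * m := by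
      calc m = ∑ y ∈ Zf c s', qr Q z0 y * w y := hrec
        _ ≤ ∑ y ∈ Zf c s', qr Q z0 y * m :=
            Finset.sum_le_sum fun y _ => mul_le_mul_of_nonneg_left (hmw y) (qr_nonneg Q z0 y)
        _ = σ * m := by rw [hσ, Finset.sum_mul]
    have hσ1 : σ = 1 := by nlinarith
    have hterm : ∀ y ∈ Zf c s', qr Q z0 y * (m - w y) = 0 := by
      have hsum0 : ∑ y ∈ Zf c s', qr Q z0 y * (m - w y) = 0 := by
        have : ∑ y ∈ Zf c s', qr Q z0 y * (m - w y)
            = σ * m - ∑ y ∈ Zf c s', qr Q z0 y * w y := by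
          rw [hσ, Finset.sum_mul, ← Finset.sum_sub_distrib]
          exact Finset.sum_congr rfl fun y _ => by ring
        rw [this, ← hrec, hσ1]; ring
      intro y hy
      have := (Finset.sum_eq_zero_iff_of_nonneg (fun y hy =>
        mul_nonneg (qr_nonneg Q z0 y) (by linarith [hmw y]))).1 hsum0
      exact this y hy
    have hzero : ∀ y ∈ Zf c s', ¬ (w y = m) → qr Q z0 y = 0 := by
      intro y hy hne'
      have h1 := hterm y hy
      have h2 : m - w y > 0 := lt_of_le_of_ne (by linarith [hmw y]) (by
        intro h; exact hne' (by linarith))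
      rcases mul_eq_zero.1 h1 with h | h
      · exact h
      · linarith
    have := Finset.sum_filter_add_sum_filter_not (Zf c s') (fun y => w y = m) (qr Q z0)
    have hzero' : ∑ y ∈ (Zf c s').filter (fun y => ¬ w y = m), qr Q z0 y = 0 :=
      Finset.sum_eq_zero fun y hy => by
        rw [Finset.mem_filter] at hy
        exact hzero y hy.1 hy.2
    rw [hU]
    rw [hσ] at hσ1
    rw [← hσ1, ← this, hzero', add_zero]
  have hUv : ∀ k, ∀ z0 ∈ U, vseq Q c s' k z0 = 1 := by
    intro k
    induction k with
    | zero =>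
      intro z0 hz0
      unfold vseq
      rw [if_pos (hUsub hz0)]
      rfl
    | succ k ih =>
      intro z0 hz0
      have hz0Z : z0 ∈ Zf c s' := hUsub hz0
      rw [vseq_rec, if_pos hz0Z]
      have hge : ∑ y ∈ Zf c s', qr Q z0 y * vseq Q c s' k y ≥ ∑ y ∈ U, qr Q z0 y * vseq Q c s' k y :=
        Finset.sum_le_sum_of_subset_of_nonneg hUsub fun y _ _ =>
          mul_nonneg (qr_nonneg Q z0 y) (vseq_nonneg hQ k y)
      have heq1 : ∑ y ∈ U, qr Q z0 y * vseq Q c s' k y = 1 := by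
        rw [show ∑ y ∈ U, qr Q z0 y * vseq Q c s' k y = ∑ y ∈ U, qr Q z0 y from
          Finset.sum_congr rfl fun y hy => by rw [ih y hy, mul_one]]
        exact hUq z0 hz0
      have hle : ∑ y ∈ Zf c s', qr Q z0 y * vseq Q c s' k y ≤ 1 := by
        calc ∑ y ∈ Zf c s', qr Q z0 y * vseq Q c s' k y
            ≤ ∑ y ∈ Zf c s', qr Q z0 y :=
              Finset.sum_le_sum fun y hy => by
                calc qr Q z0 y * vseq Q c s' k y ≤ qr Q z0 y * 1 :=
                      mul_le_mul_of_nonneg_left (vseq_le_one hQ k y) (qr_nonneg Q z0 y)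
                  _ = qr Q z0 y := mul_one _
          _ ≤ 1 := opW_sub_stochastic _ _ (qr_nonneg Q) (qr_sum_one hQ) z0
      linarith [heq1 ▸ hge]
  -- contradiction with htrap
  have hzstU : zst ∈ U := by
    rw [hU, Finset.mem_filter]
    have hzstZ : zst ∈ Zf c s' := by
      by_contra hno
      have h0 : w zst = 0 := by rw [hw_rec zst, if_neg hno]
      have hmz : m = w zst := hm.trans hzst
      linarith
    exact ⟨hzstZ, hzst.symm⟩
  have hzstZ : zst ∈ Zf c s' := hUsub hzstU
  rw [Zf, Finset.mem_filter] at hzstZ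
  exact htrap zst hzstZ.2.1 hzstZ.2.2 (fun k => hUv k zst hzstU)

end LEMA
section TEL

open Filter Finset

variable {S : Type*} [Fintype S] [DecidableEq S]

/-- Telescoping identity for shaped hitting costs. -/
lemma TEL [Nonempty S] {Q : S → S → ℝ≥0∞} (hQ : ∀ x, ∑ y, Q x y = 1)
    (c cφ φv : S → ℝ) (hc : ∀ x, 0 ≤ c x) (hcφ : ∀ x, 0 ≤ cφ x)
    (hrel : ∀ x, cφ x = c x + φv x - ∑ y, qr Q x y * φv y)
    (s s' : S) (hss : s ≠ s')
    (hfin : hitCostE Q (fun x => ENNReal.ofReal (c x)) s s' ≠ ⊤)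
    (hsurv : Tendsto (fun t : ℕ => (opW (qr Q) ({s'}ᶜ))^[t] (fun _ => (1:ℝ)) s) atTop (nhds 0)) :
    hitCostE Q (fun x => ENNReal.ofReal (cφ x)) s s'
      = ENNReal.ofReal ((hitCostE Q (fun x => ENNReal.ofReal (c x)) s s').toReal + φv s - φv s')
    ∧ 0 ≤ (hitCostE Q (fun x => ENNReal.ofReal (c x)) s s').toReal + φv s - φv s' := by
  classical
  set W : Finset S := ({s'}ᶜ : Finset S) with hW
  set T : (S → ℝ) → (S → ℝ) := opW (qr Q) W with hT
  have hsW : s ∈ W := (mem_compl_singleton s s').2 hss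
  obtain ⟨hsumA, htsumA⟩ := summable_cost hQ c hc s s' hss hfin
  set a : ℕ → ℝ := fun j => T^[j] c s with ha
  set b : ℕ → ℝ := fun j => T^[j] cφ s with hb
  set F : ℕ → ℝ := fun j => T^[j] φv s with hF
  set Sv : ℕ → ℝ := fun j => T^[j] (fun _ => (1:ℝ)) s with hSv
  set g0 : S → ℝ := fun x => ∑ y, qr Q x y * φv y with hg0
  set gg : S → ℝ := fun x => qr Q x s' with hgg
  -- step 1: pointwise identity for b
  have hsplit_sum : ∀ x (f : S → ℝ), ∑ y, qr Q x y * f y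
      = qr Q x s' * f s' + ∑ y ∈ W, qr Q x y * f y :=
    fun x f => Fintype.sum_eq_add_sum_compl s' (fun y => qr Q x y * f y)
  have hg0W : ∀ x ∈ W, g0 x = T φv x + φv s' * gg x := by
    intro x hx
    rw [hg0]; dsimp only
    rw [hsplit_sum x φv, hT]
    unfold opW
    rw [if_pos hx, hgg]
    ring
  have hggW : ∀ x ∈ W, gg x = (fun y => (fun _ => (1:ℝ)) y - T (fun _ => (1:ℝ)) y) x := by
    intro x hx
    have h1 : T (fun _ => (1:ℝ)) x = ∑ y ∈ W, qr Q x y := by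
      rw [hT]; unfold opW
      rw [if_pos hx]
      exact Finset.sum_congr rfl fun y _ => mul_one _
    have h2 : (1:ℝ) = qr Q x s' + ∑ y ∈ W, qr Q x y := by
      have h3 := hsplit_sum x (fun _ => 1)
      simp only [mul_one] at h3
      rw [← qr_sum_one hQ x]
      exact h3
    rw [hgg]; dsimp only
    rw [h1]
    linarith
  have hTgg : ∀ j, T^[j] gg s = Sv j - Sv (j + 1) := by
    intro j
    have e1 : T^[j] gg s = T^[j] (fun y => (fun _ => (1:ℝ)) y - T (fun _ => (1:ℝ)) y) s :=
      opW_iter_congr _ _ hggW j s hsW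
    have e2 : T^[j] (fun y => (fun _ => (1:ℝ)) y - T (fun _ => (1:ℝ)) y) s
        = T^[j] (fun _ => (1:ℝ)) s - T^[j] (T (fun _ => (1:ℝ))) s :=
      congrFun (opW_iter_sub (qr Q) W _ _ j) s
    have e3 : T^[j] (T (fun _ => (1:ℝ))) s = Sv (j + 1) :=
      (congrFun (Function.iterate_succ_apply T j (fun _ => (1:ℝ))) s).symm
    rw [e1, e2, e3]
  have hTg0 : ∀ j, T^[j] g0 s = F (j + 1) + φv s' * (Sv j - Sv (j + 1)) := by
    intro j
    have e1 : T^[j] g0 s = T^[j] (fun y => T φv y + φv s' * gg y) s :=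
      opW_iter_congr _ _ hg0W j s hsW
    have e2 : T^[j] (fun y => T φv y + φv s' * gg y) s
        = T^[j] (T φv) s + T^[j] (fun y => φv s' * gg y) s :=
      congrFun (opW_iter_add (qr Q) W (T φv) (fun y => φv s' * gg y) j) s
    have e3 : T^[j] (T φv) s = F (j + 1) :=
      (congrFun (Function.iterate_succ_apply T j φv) s).symm
    have e4 : T^[j] (fun y => φv s' * gg y) s = φv s' * T^[j] gg s :=
      congrFun (opW_iter_smul (qr Q) W (φv s') gg j) s
    rw [e1, e2, e3, e4, hTgg j]
  have hbj : ∀ j, b j = a j + (F j - F (j + 1)) - φv s' * (Sv j - Sv (j + 1)) := by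
    intro j
    have hceq : cφ = fun x => (fun x' => c x' + φv x') x - g0 x := by
      funext x
      rw [hrel x, hg0]
    have e1 : b j = T^[j] (fun x => (fun x' => c x' + φv x') x - g0 x) s := by
      rw [hb]; dsimp only; rw [hceq]
    have e2 : T^[j] (fun x => (fun x' => c x' + φv x') x - g0 x) s
        = T^[j] (fun x' => c x' + φv x') s - T^[j] g0 s :=
      congrFun (opW_iter_sub (qr Q) W _ _ j) s
    have e3 : T^[j] (fun x' => c x' + φv x') s = a j + F j :=
      congrFun (opW_iter_add (qr Q) W c φv j) s
    rw [e1, e2, e3, hTg0 j]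
    ring
  -- step 2: partial sums
  have hpart : ∀ N, ∑ j ∈ Finset.range N, b j
      = (∑ j ∈ Finset.range N, a j) + (φv s - F N) - φv s' * (1 - Sv N) := by
    intro N
    have h1 : ∑ j ∈ Finset.range N, b j
        = ∑ j ∈ Finset.range N, (a j + (F j - F (j + 1)) - φv s' * (Sv j - Sv (j + 1))) :=
      Finset.sum_congr rfl fun j _ => hbj j
    rw [h1]
    have h2 : ∑ j ∈ Finset.range N, (F j - F (j + 1)) = F 0 - F N := Finset.sum_range_sub' F N
    have h3 : ∑ j ∈ Finset.range N, (Sv j - Sv (j + 1)) = Sv 0 - Sv N := Finset.sum_range_sub' Sv N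
    have hF0 : F 0 = φv s := rfl
    have hSv0 : Sv 0 = 1 := rfl
    rw [Finset.sum_sub_distrib, Finset.sum_add_distrib, h2, ← Finset.mul_sum, h3, hF0, hSv0]
  -- step 3: limits
  have hne : (Finset.univ : Finset S).Nonempty := Finset.univ_nonempty
  set Cφ : ℝ := Finset.univ.sup' hne (fun y => |φv y|) with hCφ
  have hCφ_ge : ∀ y, |φv y| ≤ Cφ := fun y => by
    rw [hCφ]; exact Finset.le_sup' (fun y => |φv y|) (Finset.mem_univ y)
  have hFbd : ∀ N, |F N| ≤ Cφ * Sv N := by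
    intro N
    rw [abs_le]
    constructor
    · have h1 : T^[N] (fun y => (-Cφ) * (fun _ => (1:ℝ)) y) s ≤ T^[N] φv s :=
        opW_iter_mono _ _ (qr_nonneg Q)
          (fun y _ => by
            have := hCφ_ge y
            have := abs_le.1 (hCφ_ge y)
            simp only [mul_one]
            linarith [this.1]) N s hsW
      have h2 : T^[N] (fun y => (-Cφ) * (fun _ => (1:ℝ)) y) s = (-Cφ) * Sv N :=
        congrFun (opW_iter_smul (qr Q) W (-Cφ) (fun _ => (1:ℝ)) N) s
      rw [h2] at h1
      linarith
    · have h1 : T^[N] φv s ≤ T^[N] (fun y => Cφ * (fun _ => (1:ℝ)) y) s :=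
        opW_iter_mono _ _ (qr_nonneg Q)
          (fun y _ => by
            have := abs_le.1 (hCφ_ge y)
            simp only [mul_one]
            linarith [this.2]) N s hsW
      have h2 : T^[N] (fun y => Cφ * (fun _ => (1:ℝ)) y) s = Cφ * Sv N :=
        congrFun (opW_iter_smul (qr Q) W Cφ (fun _ => (1:ℝ)) N) s
      rw [h2] at h1
      exact h1
  have htendCSv : Tendsto (fun N => Cφ * Sv N) atTop (nhds 0) := by
    have := hsurv.const_mul Cφ
    rwa [mul_zero] at this
  have htendF : Tendsto F atTop (nhds 0) :=
    squeeze_zero_norm (fun N => by rw [Real.norm_eq_abs]; exact hFbd N) htendCSv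
  set L : ℝ := (∑' j, a j) + φv s - φv s' with hL
  have htendPart : Tendsto (fun N => ∑ j ∈ Finset.range N, b j) atTop (nhds L) := by
    have h1 : Tendsto (fun N => ∑ j ∈ Finset.range N, a j) atTop (nhds (∑' j, a j)) :=
      hsumA.hasSum.tendsto_sum_nat
    have h2 : Tendsto (fun N => φv s - F N) atTop (nhds (φv s - 0)) :=
      tendsto_const_nhds.sub htendF
    have h3 : Tendsto (fun N => φv s' * (1 - Sv N)) atTop (nhds (φv s' * (1 - 0))) :=
      (tendsto_const_nhds.sub hsurv).const_mul _
    have h4 := (h1.add h2).sub h3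
    have h5 : (∑' j, a j) + (φv s - 0) - φv s' * (1 - 0) = L := by rw [hL]; ring
    rw [h5] at h4
    have h6 : (fun N => ∑ j ∈ Finset.range N, b j)
        = fun N => (∑ j ∈ Finset.range N, a j) + (φv s - F N) - φv s' * (1 - Sv N) :=
      funext hpart
    rw [h6]
    exact h4
  -- step 4: summability of b and the tsum value
  have hb_nonneg : ∀ j, 0 ≤ b j := fun j =>
    opW_iter_nonneg _ _ (qr_nonneg Q) (fun y _ => hcφ y) j s hsW
  have hmono : Monotone (fun N => ∑ j ∈ Finset.range N, b j) := by
    intro N M hNM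
    exact Finset.sum_le_sum_of_subset_of_nonneg (Finset.range_subset_range.2 hNM)
      (fun j _ _ => hb_nonneg j)
  have hple : ∀ N, ∑ j ∈ Finset.range N, b j ≤ L := fun N => hmono.ge_of_tendsto htendPart N
  have hsumB : Summable b := summable_of_sum_range_le hb_nonneg hple
  have htsumB : ∑' j, b j = L := tendsto_nhds_unique hsumB.hasSum.tendsto_sum_nat htendPart
  have hL0 : 0 ≤ L := htsumB ▸ tsum_nonneg hb_nonneg
  have hLH : L = (hitCostE Q (fun x => ENNReal.ofReal (c x)) s s').toReal + φv s - φv s' := by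
    rw [hL, htsumA]
  refine ⟨?_, hLH ▸ hL0⟩
  have heqb : hitCostE Q (fun x => ENNReal.ofReal (cφ x)) s s' = ∑' j, ENNReal.ofReal (b j) := by
    rw [hitCostE_eq hQ cφ hcφ s s']
    exact tsum_congr fun j => by rw [if_pos hsW]
  rw [heqb, ← ENNReal.ofReal_tsum_of_nonneg hb_nonneg hsumB, htsumB, hLH]

end TEL
section GAIN

open Filter Finset

variable {S A : Type*} [Fintype S] [DecidableEq S] [Nonempty S] [Fintype A] [Nonempty A]

lemma expReward_eq (p : S → A → S → ℝ≥0∞) (rbar : S → A → ℝ) (π : S → A) (s : S) (t : ℕ) :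
    expRewardAt p rbar π s t
      = (opW (qr (polKernel p π)) Finset.univ)^[t] (fun x => rbar x (π x)) s := by
  have h := sum_path_eq (polKernel p π) Finset.univ (fun x => rbar x (π x)) s t
  simp only [Finset.mem_univ, if_true, forall_const] at h
  exact h

lemma polKernel_rows (p : S → A → S → ℝ≥0∞) (hp : ∀ s a, ∑ s', p s a s' = 1) (π : S → A) :
    ∀ x, ∑ y, polKernel p π x y = 1 := fun x => hp x (π x)

lemma expReward_bounds (p : S → A → S → ℝ≥0∞) (hp : ∀ s a, ∑ s', p s a s' = 1)
    (rmax : ℝ) (rbar : S → A → ℝ) (hr : ∀ s a, rbar s a ∈ Set.Icc 0 rmax)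
    (π : S → A) (s : S) (t : ℕ) :
    0 ≤ expRewardAt p rbar π s t ∧ expRewardAt p rbar π s t ≤ rmax := by
  have hQ := polKernel_rows p hp π
  rw [expReward_eq]
  constructor
  · exact opW_iter_nonneg _ _ (qr_nonneg _) (fun y _ => (hr y (π y)).1) t s (Finset.mem_univ s)
  · have h1 : (opW (qr (polKernel p π)) Finset.univ)^[t] (fun x => rbar x (π x)) s
        ≤ (opW (qr (polKernel p π)) Finset.univ)^[t] (fun x => rmax * (fun _ => (1:ℝ)) x) s :=
      opW_iter_mono _ _ (qr_nonneg _)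
        (fun y _ => by simpa using (hr y (π y)).2) t s (Finset.mem_univ s)
    have h2 : (opW (qr (polKernel p π)) Finset.univ)^[t] (fun x => rmax * (fun _ => (1:ℝ)) x) s
        = rmax * (opW (qr (polKernel p π)) Finset.univ)^[t] (fun _ => (1:ℝ)) s :=
      congrFun (opW_iter_smul _ _ rmax _ t) s
    rw [h2, opW_univ_one _ (qr_sum_one hQ) t s, mul_one] at h1
    exact h1

lemma avgSeq_bounds (p : S → A → S → ℝ≥0∞) (hp : ∀ s a, ∑ s', p s a s' = 1)
    (rmax : ℝ) (hrmax : 0 ≤ rmax) (rbar : S → A → ℝ) (hr : ∀ s a, rbar s a ∈ Set.Icc 0 rmax)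
    (π : S → A) (s : S) (T : ℕ) :
    0 ≤ avgSeq p rbar π s T ∧ avgSeq p rbar π s T ≤ rmax := by
  unfold avgSeq
  rcases Nat.eq_zero_or_pos T with hT | hT
  · subst hT
    simp [hrmax]
  · have hTpos : (0:ℝ) < T := by exact_mod_cast hT
    constructor
    · refine mul_nonneg (by positivity) (Finset.sum_nonneg fun t _ =>
        (expReward_bounds p hp rmax rbar hr π s t).1)
    · have h1 : ∑ t ∈ Finset.range T, expRewardAt p rbar π s t ≤ T * rmax := by
        calc ∑ t ∈ Finset.range T, expRewardAt p rbar π s t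
            ≤ ∑ _t ∈ Finset.range T, rmax :=
              Finset.sum_le_sum fun t _ => (expReward_bounds p hp rmax rbar hr π s t).2
          _ = T * rmax := by rw [Finset.sum_const, Finset.card_range, nsmul_eq_mul]
      calc (1 / (T:ℝ)) * ∑ t ∈ Finset.range T, expRewardAt p rbar π s t
          ≤ (1 / (T:ℝ)) * (T * rmax) := by
            exact mul_le_mul_of_nonneg_left h1 (by positivity)
        _ = rmax := by field_simp
  
lemma gain_le_rmax (p : S → A → S → ℝ≥0∞) (hp : ∀ s a, ∑ s', p s a s' = 1)
    (rmax : ℝ) (hrmax : 0 ≤ rmax) (rbar : S → A → ℝ) (hr : ∀ s a, rbar s a ∈ Set.Icc 0 rmax)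
    (π : S → A) (s : S) : gain p rbar π s ≤ rmax := by
  unfold gain
  refine limsup_le_of_le ?_ (Eventually.of_forall fun T =>
    (avgSeq_bounds p hp rmax hrmax rbar hr π s T).2)
  exact isCoboundedUnder_le_of_le atTop fun T => (avgSeq_bounds p hp rmax hrmax rbar hr π s T).1

lemma gain_le_optGain (p : S → A → S → ℝ≥0∞) (hp : ∀ s a, ∑ s', p s a s' = 1)
    (rmax : ℝ) (hrmax : 0 ≤ rmax) (rbar : S → A → ℝ) (hr : ∀ s a, rbar s a ∈ Set.Icc 0 rmax)
    (π : S → A) (s : S) : gain p rbar π s ≤ optGain p rbar := by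
  unfold optGain
  have hb1 : BddAbove (Set.range fun π : S → A => gain p rbar π s) :=
    ⟨rmax, by rintro x ⟨π', rfl⟩; exact gain_le_rmax p hp rmax hrmax rbar hr π' s⟩
  have hb2 : BddAbove (Set.range fun s : S => ⨆ π : S → A, gain p rbar π s) := by
    refine ⟨rmax, ?_⟩
    rintro x ⟨s0, rfl⟩
    exact ciSup_le fun π' => gain_le_rmax p hp rmax hrmax rbar hr π' s0
  calc gain p rbar π s ≤ ⨆ π : S → A, gain p rbar π s := le_ciSup hb1 π
    _ ≤ ⨆ s : S, ⨆ π : S → A, gain p rbar π s := le_ciSup hb2 s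

/-- No zero-cost trap when the optimal gain is unsaturated. -/
lemma noTrap (p : S → A → S → ℝ≥0∞) (hp : ∀ s a, ∑ s', p s a s' = 1)
    (rmax : ℝ) (hrmax : 0 ≤ rmax)
    (rbar : S → A → ℝ) (hr : ∀ s a, rbar s a ∈ Set.Icc 0 rmax)
    (hρ : optGain p rbar < rmax) (π : S → A) (s' : S) :
    ∀ z, z ≠ s' → rmax - rbar z (π z) = 0 →
      ¬ (∀ k, vseq (polKernel p π) (fun x => rmax - rbar x (π x)) s' k z = 1) := by
  intro z hzs hcz hall
  set Q := polKernel p π with hQdef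
  have hQ : ∀ x, ∑ y, Q x y = 1 := polKernel_rows p hp π
  set c : S → ℝ := fun x => rmax - rbar x (π x) with hc
  set g : S → ℝ := fun x => rbar x (π x) with hg
  set P : (S → ℝ) → (S → ℝ) := opW (qr Q) Finset.univ with hP
  -- Main claim : trap states have all expected rewards equal to rmax
  have hmain : ∀ k z0, vseq Q c s' k z0 = 1 → P^[k] g z0 = rmax := by
    intro k
    induction k with
    | zero =>
      intro z0 hv
      unfold vseq at hv
      by_cases hz0 : z0 ∈ Zf c s'
      · rw [Zf, Finset.mem_filter] at hz0
        have : c z0 = 0 := hz0.2.2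
        have : rbar z0 (π z0) = rmax := by rw [hc] at this; dsimp only at this; linarith
        simpa [hg] using this
      · rw [if_neg hz0] at hv; norm_num at hv
    | succ k ih =>
      intro z0 hv
      rw [vseq_rec] at hv
      by_cases hz0 : z0 ∈ Zf c s'
      swap
      · rw [if_neg hz0] at hv; norm_num at hv
      rw [if_pos hz0] at hv
      set Z := Zf c s' with hZ
      have hvle : ∀ y, vseq Q c s' k y ≤ 1 := vseq_le_one hQ k
      have hvnn : ∀ y, 0 ≤ vseq Q c s' k y := vseq_nonneg hQ k
      have hσle : ∑ y ∈ Z, qr Q z0 y ≤ 1 :=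
        opW_sub_stochastic _ _ (qr_nonneg Q) (qr_sum_one hQ) z0
      have hσ1 : ∑ y ∈ Z, qr Q z0 y = 1 := by
        have h1 : (1:ℝ) ≤ ∑ y ∈ Z, qr Q z0 y := by
          rw [← hv]
          exact Finset.sum_le_sum fun y _ => by
            calc qr Q z0 y * vseq Q c s' k y ≤ qr Q z0 y * 1 :=
                  mul_le_mul_of_nonneg_left (hvle y) (qr_nonneg Q z0 y)
              _ = qr Q z0 y := mul_one _
        linarith
      have hterm : ∀ y ∈ Z, qr Q z0 y * (1 - vseq Q c s' k y) = 0 := by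
        have hsum0 : ∑ y ∈ Z, qr Q z0 y * (1 - vseq Q c s' k y) = 0 := by
          have : ∑ y ∈ Z, qr Q z0 y * (1 - vseq Q c s' k y)
              = (∑ y ∈ Z, qr Q z0 y) - ∑ y ∈ Z, qr Q z0 y * vseq Q c s' k y := by
            rw [← Finset.sum_sub_distrib]
            exact Finset.sum_congr rfl fun y _ => by ring
          rw [this, hσ1, hv]; ring
        exact fun y hy => (Finset.sum_eq_zero_iff_of_nonneg fun y hy =>
          mul_nonneg (qr_nonneg Q z0 y) (by linarith [hvle y])).1 hsum0 y hy
      have hoffZ : ∀ y, y ∉ Z → qr Q z0 y = 0 := by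
        have hs : ∑ y ∈ Finset.univ \ Z, qr Q z0 y = 0 := by
          have := Finset.sum_sdiff (Finset.subset_univ Z)
            (f := fun y => qr Q z0 y)
          rw [qr_sum_one hQ z0, hσ1] at this
          linarith
        intro y hy
        exact (Finset.sum_eq_zero_iff_of_nonneg fun y _ => qr_nonneg Q z0 y).1 hs y
          (Finset.mem_sdiff.2 ⟨Finset.mem_univ y, hy⟩)
      have hstep : P^[k+1] g z0 = ∑ y, qr Q z0 y * P^[k] g y := by
        rw [congrFun (Function.iterate_succ_apply' P k g) z0, hP]
        unfold opW
        rw [if_pos (Finset.mem_univ z0)]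
      rw [hstep]
      have : ∑ y, qr Q z0 y * P^[k] g y = ∑ y, qr Q z0 y * rmax := by
        refine Finset.sum_congr rfl fun y _ => ?_
        by_cases hq0 : qr Q z0 y = 0
        · rw [hq0]; ring
        · have hyZ : y ∈ Z := by
            by_contra hyZ
            exact hq0 (hoffZ y hyZ)
          have hvy : vseq Q c s' k y = 1 := by
            rcases mul_eq_zero.1 (hterm y hyZ) with h | h
            · exact absurd h hq0
            · linarith
          rw [ih y hvy]
      rw [this, ← Finset.sum_mul, qr_sum_one hQ z0, one_mul]
  -- expected rewards at the trap are rmax at every step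
  have hexp : ∀ t, expRewardAt p rbar π z t = rmax := by
    intro t
    rw [expReward_eq]
    exact hmain t z (hall t)
  have havg : ∀ T, 1 ≤ T → avgSeq p rbar π z T = rmax := by
    intro T hT
    have hTpos : (0:ℝ) < T := by exact_mod_cast hT
    unfold avgSeq
    rw [Finset.sum_congr rfl fun t _ => hexp t, Finset.sum_const, Finset.card_range,
      nsmul_eq_mul]
    field_simp
  have hgain : gain p rbar π z = rmax := by
    unfold gain
    rw [limsup_congr (((eventually_ge_atTop 1).mono fun T hT => havg T hT) :
      ∀ᶠ T in atTop, avgSeq p rbar π z T = (fun _ => rmax) T)]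
    exact limsup_const rmax
  have := gain_le_optGain p hp rmax hrmax rbar hr π z
  rw [hgain] at this
  linarith

end GAIN
section FINAL

open Filter Finset

variable {S A : Type*} [Fintype S] [DecidableEq S] [Nonempty S] [Fintype A] [Nonempty A]

lemma gain_shaped_le (p : S → A → S → ℝ≥0∞) (hp : ∀ s a, ∑ s', p s a s' = 1)
    (rmax : ℝ) (hrmax : 0 ≤ rmax)
    (rbar : S → A → ℝ) (hr : ∀ s a, rbar s a ∈ Set.Icc 0 rmax) (φ : S → ℝ)
    (hφbdd : ∀ s a, shapedRbar p rbar φ s a ∈ Set.Icc 0 rmax) (π : S → A) (s : S) :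
    gain p (shapedRbar p rbar φ) π s ≤ gain p rbar π s := by
  classical
  set Q := polKernel p π with hQdef
  have hQ : ∀ x, ∑ y, Q x y = 1 := polKernel_rows p hp π
  set P : (S → ℝ) → (S → ℝ) := opW (qr Q) Finset.univ with hP
  set g : S → ℝ := fun x => rbar x (π x) with hg
  set Fφ : ℕ → ℝ := fun t => P^[t] φ s with hFφ
  have hg' : (fun x => shapedRbar p rbar φ x (π x))
      = fun x => g x + (fun x' => P φ x' - φ x') x := by
    funext x
    show rbar x (π x) - φ x + (∑ y, (p x (π x) y).toReal * φ y)
      = rbar x (π x) + (P φ x - φ x)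
    have hPφ : P φ x = ∑ y, (p x (π x) y).toReal * φ y := by
      rw [hP]
      unfold opW
      rw [if_pos (Finset.mem_univ x)]
      rfl
    rw [hPφ]
    ring
  -- the shaped expected rewards
  have hexp' : ∀ t, expRewardAt p (shapedRbar p rbar φ) π s t
      = expRewardAt p rbar π s t + (Fφ (t + 1) - Fφ t) := by
    intro t
    rw [expReward_eq, expReward_eq]
    have e0 : (opW (qr (polKernel p π)) Finset.univ)^[t]
        (fun x => shapedRbar p rbar φ x (π x)) s
        = P^[t] (fun x => g x + (fun x' => P φ x' - φ x') x) s := by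
      rw [hP, hQdef, hg']
    have e1 : P^[t] (fun x => g x + (fun x' => P φ x' - φ x') x) s
        = P^[t] g s + P^[t] (fun x' => P φ x' - φ x') s :=
      congrFun (opW_iter_add (qr Q) Finset.univ g (fun x' => P φ x' - φ x') t) s
    have e2 : P^[t] (fun x' => P φ x' - φ x') s = P^[t] (P φ) s - P^[t] φ s :=
      congrFun (opW_iter_sub (qr Q) Finset.univ (P φ) φ t) s
    have e3 : P^[t] (P φ) s = Fφ (t + 1) :=
      (congrFun (Function.iterate_succ_apply P t φ) s).symm
    rw [e0, e1, e2, e3]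
  have havg' : ∀ T : ℕ, avgSeq p (shapedRbar p rbar φ) π s T
      = avgSeq p rbar π s T + (1 / (T:ℝ)) * (Fφ T - φ s) := by
    intro T
    unfold avgSeq
    rw [Finset.sum_congr rfl fun t _ => hexp' t, Finset.sum_add_distrib,
      Finset.sum_range_sub (fun t => Fφ t) T]
    have hF0 : Fφ 0 = φ s := rfl
    rw [hF0, mul_add]
  -- bound on Fφ
  have hne : (Finset.univ : Finset S).Nonempty := Finset.univ_nonempty
  set Cφ : ℝ := Finset.univ.sup' hne (fun y => |φ y|) with hCφ
  have hCφ_ge : ∀ y, |φ y| ≤ Cφ := fun y => by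
    rw [hCφ]; exact Finset.le_sup' (fun y => |φ y|) (Finset.mem_univ y)
  have hFbd : ∀ t, |Fφ t| ≤ Cφ := by
    intro t
    rw [abs_le]
    constructor
    · have h1 : P^[t] (fun y => (-Cφ) * (fun _ => (1:ℝ)) y) s ≤ P^[t] φ s :=
        opW_iter_mono _ _ (qr_nonneg Q)
          (fun y _ => by
            have := abs_le.1 (hCφ_ge y)
            simp only [mul_one]
            linarith [this.1]) t s (Finset.mem_univ s)
      have h2 : P^[t] (fun y => (-Cφ) * (fun _ => (1:ℝ)) y) s
          = (-Cφ) * P^[t] (fun _ => (1:ℝ)) s :=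
        congrFun (opW_iter_smul (qr Q) Finset.univ (-Cφ) (fun _ => (1:ℝ)) t) s
      rw [h2, opW_univ_one _ (qr_sum_one hQ) t s, mul_one] at h1
      exact h1
    · have h1 : P^[t] φ s ≤ P^[t] (fun y => Cφ * (fun _ => (1:ℝ)) y) s :=
        opW_iter_mono _ _ (qr_nonneg Q)
          (fun y _ => by
            have := abs_le.1 (hCφ_ge y)
            simp only [mul_one]
            linarith [this.2]) t s (Finset.mem_univ s)
      have h2 : P^[t] (fun y => Cφ * (fun _ => (1:ℝ)) y) s
          = Cφ * P^[t] (fun _ => (1:ℝ)) s :=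
        congrFun (opW_iter_smul (qr Q) Finset.univ Cφ (fun _ => (1:ℝ)) t) s
      rw [h2, opW_univ_one _ (qr_sum_one hQ) t s, mul_one] at h1
      exact h1
  -- the correction term tends to zero
  have hcorr : Tendsto (fun T : ℕ => (1 / (T:ℝ)) * (Fφ T - φ s)) atTop (nhds 0) := by
    have hb : ∀ T : ℕ, ‖(1 / (T:ℝ)) * (Fφ T - φ s)‖ ≤ 2 * Cφ * (1 / (T:ℝ)) := by
      intro T
      rcases Nat.eq_zero_or_pos T with hT | hT
      · subst hT; simp
      · have hTpos : (0:ℝ) < T := by exact_mod_cast hT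
        rw [Real.norm_eq_abs, abs_mul, abs_of_pos (by positivity : (0:ℝ) < 1 / (T:ℝ))]
        rw [mul_comm (2 * Cφ) (1 / (T:ℝ))]
        refine mul_le_mul_of_nonneg_left ?_ (by positivity)
        calc |Fφ T - φ s| ≤ |Fφ T| + |φ s| := abs_sub _ _
          _ ≤ Cφ + Cφ := add_le_add (hFbd T) (hCφ_ge s)
          _ = 2 * Cφ := by ring
    have hg0 : Tendsto (fun T : ℕ => 2 * Cφ * (1 / (T:ℝ))) atTop (nhds 0) := by
      have := tendsto_one_div_atTop_nhds_zero_nat.const_mul (2 * Cφ)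
      rwa [mul_zero] at this
    exact squeeze_zero_norm hb hg0
  -- epsilon argument
  have hcob : IsCoboundedUnder (· ≤ ·) atTop (avgSeq p (shapedRbar p rbar φ) π s) :=
    isCoboundedUnder_le_of_le atTop fun T : ℕ =>
      (avgSeq_bounds p hp rmax hrmax (shapedRbar p rbar φ) hφbdd π s T).1
  have hbddu : IsBoundedUnder (· ≤ ·) atTop (avgSeq p rbar π s) :=
    isBoundedUnder_of ⟨rmax, fun T : ℕ => (avgSeq_bounds p hp rmax hrmax rbar hr π s T).2⟩
  have hclaim : ∀ ε : ℝ, 0 < ε → gain p (shapedRbar p rbar φ) π s ≤ gain p rbar π s + ε := by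
    intro ε hε
    have h1 : limsup (avgSeq p rbar π s) atTop < gain p rbar π s + ε / 2 := by
      unfold gain
      linarith
    have h2 : ∀ᶠ T in atTop, avgSeq p rbar π s T < gain p rbar π s + ε / 2 :=
      eventually_lt_of_limsup_lt h1 hbddu
    have h3 : ∀ᶠ T : ℕ in atTop, (1 / (T:ℝ)) * (Fφ T - φ s) ≤ ε / 2 :=
      hcorr.eventually (eventually_le_nhds (by linarith))
    have h4 : ∀ᶠ T in atTop, avgSeq p (shapedRbar p rbar φ) π s T ≤ gain p rbar π s + ε := by
      filter_upwards [h2, h3] with T hT2 hT3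
      rw [havg' T]
      linarith
    exact limsup_le_of_le hcob h4
  by_contra hlt
  push_neg at hlt
  have := hclaim ((gain p (shapedRbar p rbar φ) π s - gain p rbar π s) / 2) (by linarith)
  linarith

lemma optGain_shaped_le (p : S → A → S → ℝ≥0∞) (hp : ∀ s a, ∑ s', p s a s' = 1)
    (rmax : ℝ) (hrmax : 0 ≤ rmax)
    (rbar : S → A → ℝ) (hr : ∀ s a, rbar s a ∈ Set.Icc 0 rmax) (φ : S → ℝ)
    (hφbdd : ∀ s a, shapedRbar p rbar φ s a ∈ Set.Icc 0 rmax) :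
    optGain p (shapedRbar p rbar φ) ≤ optGain p rbar := by
  unfold optGain
  refine ciSup_le fun s => ciSup_le fun π => ?_
  exact (gain_shaped_le p hp rmax hrmax rbar hr φ hφbdd π s).trans
    (gain_le_optGain p hp rmax hrmax rbar hr π s)

lemma shaped_inverse (p : S → A → S → ℝ≥0∞) (rbar : S → A → ℝ) (φ : S → ℝ) :
    shapedRbar p (shapedRbar p rbar φ) (fun x => -φ x) = rbar := by
  funext s a
  unfold shapedRbar
  have : ∑ s', (p s a s').toReal * -φ s' = -∑ s', (p s a s').toReal * φ s' := by
    rw [← Finset.sum_neg_distrib]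
    exact Finset.sum_congr rfl fun y _ => by ring
  rw [this]
  ring

/-- The upper bound : `κ(M^φ) ≤ 2 κ(M)`. -/
lemma key (p : S → A → S → ℝ≥0∞) (hp : ∀ s a, ∑ s', p s a s' = 1)
    (rmax : ℝ) (hrmax : 0 ≤ rmax)
    (rbar : S → A → ℝ) (hr : ∀ s a, rbar s a ∈ Set.Icc 0 rmax)
    (hκfin : mehc p rmax rbar ≠ ⊤)
    (hρ : optGain p rbar < rmax)
    (φ : S → ℝ)
    (hφbdd : ∀ s a, shapedRbar p rbar φ s a ∈ Set.Icc 0 rmax) :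
    mehc p rmax (shapedRbar p rbar φ) ≤ 2 * mehc p rmax rbar := by
  classical
  set κ := mehc p rmax rbar with hκ
  rw [mehc]
  refine iSup_le fun s => iSup_le fun s' => ?_
  by_cases hss : s = s'
  · subst hss
    refine le_trans (iInf_le _ (Classical.arbitrary (S → A))) ?_
    rw [hitCostE_self]
    exact zero_le
  -- minimizing policies
  obtain ⟨π₁, hπ₁⟩ := Finite.exists_min (fun π : S → A =>
    hitCostE (polKernel p π) (fun x => ENNReal.ofReal (rmax - rbar x (π x))) s s')
  obtain ⟨π₂, hπ₂⟩ := Finite.exists_min (fun π : S → A =>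
    hitCostE (polKernel p π) (fun x => ENNReal.ofReal (rmax - rbar x (π x))) s' s)
  have hc1 : ∀ x, 0 ≤ rmax - rbar x (π₁ x) := fun x => by linarith [(hr x (π₁ x)).2]
  have hc2 : ∀ x, 0 ≤ rmax - rbar x (π₂ x) := fun x => by linarith [(hr x (π₂ x)).2]
  have hQ1 : ∀ x, ∑ y, polKernel p π₁ x y = 1 := polKernel_rows p hp π₁
  have hQ2 : ∀ x, ∑ y, polKernel p π₂ x y = 1 := polKernel_rows p hp π₂
  have hH1κ : hitCostE (polKernel p π₁)
      (fun x => ENNReal.ofReal (rmax - rbar x (π₁ x))) s s' ≤ κ := by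
    have h1 : hitCostE (polKernel p π₁) (fun x => ENNReal.ofReal (rmax - rbar x (π₁ x))) s s'
        = ⨅ π : S → A, hitCostE (polKernel p π)
            (fun x => ENNReal.ofReal (rmax - rbar x (π x))) s s' :=
      le_antisymm (le_iInf hπ₁) (iInf_le _ π₁)
    rw [h1, hκ, mehc]
    exact le_iSup₂ (f := fun s s' => ⨅ π : S → A, hitCostE (polKernel p π)
      (fun x => ENNReal.ofReal (rmax - rbar x (π x))) s s') s s'
  have hH2κ : hitCostE (polKernel p π₂)
      (fun x => ENNReal.ofReal (rmax - rbar x (π₂ x))) s' s ≤ κ := by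
    have h1 : hitCostE (polKernel p π₂) (fun x => ENNReal.ofReal (rmax - rbar x (π₂ x))) s' s
        = ⨅ π : S → A, hitCostE (polKernel p π)
            (fun x => ENNReal.ofReal (rmax - rbar x (π x))) s' s :=
      le_antisymm (le_iInf hπ₂) (iInf_le _ π₂)
    rw [h1, hκ, mehc]
    exact le_iSup₂ (f := fun s s' => ⨅ π : S → A, hitCostE (polKernel p π)
      (fun x => ENNReal.ofReal (rmax - rbar x (π x))) s s') s' s
  have hκtop : κ ≠ ⊤ := hκfin
  have hfin1 : hitCostE (polKernel p π₁)
      (fun x => ENNReal.ofReal (rmax - rbar x (π₁ x))) s s' ≠ ⊤ :=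
    (lt_of_le_of_lt hH1κ (lt_top_iff_ne_top.2 hκtop)).ne
  have hfin2 : hitCostE (polKernel p π₂)
      (fun x => ENNReal.ofReal (rmax - rbar x (π₂ x))) s' s ≠ ⊤ :=
    (lt_of_le_of_lt hH2κ (lt_top_iff_ne_top.2 hκtop)).ne
  -- survival tends to zero
  have hsurv1 := lemA hQ1 hc1 s hss
    (summable_cost hQ1 _ hc1 s s' hss hfin1).1
    (fun z hz hcz => noTrap p hp rmax hrmax rbar hr hρ π₁ s' z hz hcz)
  have hsurv2 := lemA hQ2 hc2 s' (Ne.symm hss)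
    (summable_cost hQ2 _ hc2 s' s (Ne.symm hss) hfin2).1
    (fun z hz hcz => noTrap p hp rmax hrmax rbar hr hρ π₂ s z hz hcz)
  -- telescoping
  have hrel1 : ∀ x, rmax - shapedRbar p rbar φ x (π₁ x)
      = (rmax - rbar x (π₁ x)) + φ x - ∑ y, qr (polKernel p π₁) x y * φ y := by
    intro x
    unfold shapedRbar
    have : ∑ y, qr (polKernel p π₁) x y * φ y = ∑ y, (p x (π₁ x) y).toReal * φ y := rfl
    rw [this]
    ring
  have hrel2 : ∀ x, rmax - shapedRbar p rbar φ x (π₂ x)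
      = (rmax - rbar x (π₂ x)) + φ x - ∑ y, qr (polKernel p π₂) x y * φ y := by
    intro x
    unfold shapedRbar
    have : ∑ y, qr (polKernel p π₂) x y * φ y = ∑ y, (p x (π₂ x) y).toReal * φ y := rfl
    rw [this]
    ring
  have hcφ1 : ∀ x, 0 ≤ rmax - shapedRbar p rbar φ x (π₁ x) := fun x => by
    linarith [(hφbdd x (π₁ x)).2]
  have hcφ2 : ∀ x, 0 ≤ rmax - shapedRbar p rbar φ x (π₂ x) := fun x => by
    linarith [(hφbdd x (π₂ x)).2]
  obtain ⟨hTel1, _⟩ := TEL hQ1 (fun x => rmax - rbar x (π₁ x))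
    (fun x => rmax - shapedRbar p rbar φ x (π₁ x)) φ hc1 hcφ1 hrel1 s s' hss hfin1 hsurv1
  obtain ⟨_, hTel2nn⟩ := TEL hQ2 (fun x => rmax - rbar x (π₂ x))
    (fun x => rmax - shapedRbar p rbar φ x (π₂ x)) φ hc2 hcφ2 hrel2 s' s (Ne.symm hss)
    hfin2 hsurv2
  -- conclude
  refine le_trans (iInf_le _ π₁) ?_
  rw [hTel1]
  have hb1 : (hitCostE (polKernel p π₁)
      (fun x => ENNReal.ofReal (rmax - rbar x (π₁ x))) s s').toReal ≤ κ.toReal :=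
    (ENNReal.toReal_le_toReal hfin1 hκtop).2 hH1κ
  have hb2 : (hitCostE (polKernel p π₂)
      (fun x => ENNReal.ofReal (rmax - rbar x (π₂ x))) s' s).toReal ≤ κ.toReal :=
    (ENNReal.toReal_le_toReal hfin2 hκtop).2 hH2κ
  calc ENNReal.ofReal ((hitCostE (polKernel p π₁)
        (fun x => ENNReal.ofReal (rmax - rbar x (π₁ x))) s s').toReal + φ s - φ s')
      ≤ ENNReal.ofReal (κ.toReal + κ.toReal) := ENNReal.ofReal_le_ofReal (by linarith)
    _ = κ + κ := by
        rw [ENNReal.ofReal_add ENNReal.toReal_nonneg ENNReal.toReal_nonneg,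
          ENNReal.ofReal_toReal hκtop]
    _ = 2 * κ := (two_mul κ).symm

end FINAL
end Stmt13

/-- for an MDP with finite MEHC and unsaturated optimal average reward,
potential-based reward shaping changes the MEHC by at most a factor of two:
`κ(M)/2 ≤ κ(M^φ) ≤ 2·κ(M)`. -/
theorem stmt13 {S A : Type*} [Fintype S] [DecidableEq S] [Nonempty S] [Fintype A]
    [Nonempty A]
    (p : S → A → S → ℝ≥0∞) (hp : ∀ s a, ∑ s', p s a s' = 1)
    (rmax : ℝ) (hrmax : 0 ≤ rmax)
    (rbar : S → A → ℝ) (hr : ∀ s a, rbar s a ∈ Set.Icc 0 rmax)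
    (hκfin : mehc p rmax rbar ≠ ⊤)
    (hρ : optGain p rbar < rmax)
    (φ : S → ℝ)
    (hφbdd : ∀ s a, shapedRbar p rbar φ s a ∈ Set.Icc 0 rmax) :
    mehc p rmax rbar / 2 ≤ mehc p rmax (shapedRbar p rbar φ)
    ∧ mehc p rmax (shapedRbar p rbar φ) ≤ 2 * mehc p rmax rbar := by
  have hupper := Stmt13.key p hp rmax hrmax rbar hr hκfin hρ φ hφbdd
  refine ⟨?_, hupper⟩
  have hκfin' : mehc p rmax (shapedRbar p rbar φ) ≠ ⊤ :=
    ne_top_of_le_ne_top (ENNReal.mul_ne_top (by norm_num) hκfin) hupper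
  have hρ' : optGain p (shapedRbar p rbar φ) < rmax :=
    lt_of_le_of_lt (Stmt13.optGain_shaped_le p hp rmax hrmax rbar hr φ hφbdd) hρ
  have hinv := Stmt13.shaped_inverse p rbar φ
  have h2 := Stmt13.key p hp rmax hrmax (shapedRbar p rbar φ) hφbdd hκfin' hρ'
    (fun x => -φ x) (by rw [hinv]; exact hr)
  rw [hinv] at h2
  rw [ENNReal.div_le_iff_le_mul (Or.inl two_ne_zero) (Or.inl ENNReal.ofNat_ne_top)]
  rw [mul_comm] at h2
  exact h2
end
end

section
/- Determinant formula for the stationary reward: Let P be an S × S row-stochastic matrix whose eigenvalue 1 has algebraic multiplicity one, let σ be its unique stationary distribution (the row vector with σP = σ and entries summing to 1), and let r ∈ ℝ^S be a column vector. Let A_r denote the S × S matrix whose j-th column for j ≤ S − 1 equals the j-th column of P − I and whose last column equals r, and let A_1 be the same matrix with last column the all-ones vector. Then det(A_1) ≠ 0 and σ·r = det(A_r) / det(A_1). -/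
noncomputable section

open Matrix

/-- The matrix whose first `S - 1` columns agree with those of `P - I` and whose last
column is the vector `c`. -/
def lastColReplaced {S : ℕ} (P : Matrix (Fin S) (Fin S) ℝ) (c : Fin S → ℝ) :
    Matrix (Fin S) (Fin S) ℝ :=
  Matrix.of fun i j => if (j : ℕ) = S - 1 then c i else (P - 1) i j

open Polynomial in
lemma aux_charpoly_sub_one {S : ℕ} (M : Matrix (Fin S) (Fin S) ℝ) :
    (M - 1).charpoly = (M.charpoly).comp (X + C 1) := by
  let f : ℝ[X] →+* ℝ[X] := eval₂RingHom C (X + C 1)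
  have hmat : f.mapMatrix (charmatrix M) = charmatrix (M - 1) := by
    apply Matrix.ext
    intro i j
    by_cases h : i = j
    · subst h
      simp only [RingHom.mapMatrix_apply, Matrix.map_apply, charmatrix_apply_eq,
        Matrix.sub_apply, Matrix.one_apply_eq, map_sub, f, coe_eval₂RingHom,
        eval₂_X, eval₂_C]
      rw [eval₂_sub, eval₂_X, eval₂_C]
      ring
    · simp only [RingHom.mapMatrix_apply, Matrix.map_apply, charmatrix_apply_ne _ _ _ h,
        Matrix.sub_apply, Matrix.one_apply_ne h, map_neg, f, coe_eval₂RingHom,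
        sub_zero]
      rw [eval₂_neg, eval₂_C]
  have hdet : (M.charpoly).comp (X + C 1) = (f.mapMatrix (charmatrix M)).det := by
    rw [Matrix.charpoly, ← RingHom.map_det]
    rfl
  rw [hdet, hmat, Matrix.charpoly]

lemma aux_charpoly_transpose {S : ℕ} (M : Matrix (Fin S) (Fin S) ℝ) :
    (Mᵀ).charpoly = M.charpoly := by
  have : charmatrix Mᵀ = (charmatrix M)ᵀ := by
    apply Matrix.ext
    intro i j
    by_cases h : i = j
    · subst h; simp [charmatrix_apply_eq]
    · rw [charmatrix_apply_ne _ _ _ h]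
      simp [Matrix.transpose_apply, charmatrix_apply_ne _ _ _ (Ne.symm h)]
  rw [Matrix.charpoly, this, Matrix.det_transpose, Matrix.charpoly]

lemma aux_charpoly_toLin' {S : ℕ} (M : Matrix (Fin S) (Fin S) ℝ) :
    (Matrix.toLin' M).charpoly = M.charpoly := by
  rw [← LinearMap.charpoly_toMatrix (Matrix.toLin' M) (Pi.basisFun ℝ (Fin S)),
    LinearMap.toMatrix_eq_toMatrix', LinearMap.toMatrix'_toLin']

open Module in
/-- If the charpoly of `M` has trailing degree one, then the kernel of `M` is spanned by
any single nonzero element of it. -/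
lemma aux_ker_eq_span {S : ℕ} (M : Matrix (Fin S) (Fin S) ℝ)
    (hdeg : (M.charpoly).natTrailingDegree = 1)
    (w : Fin S → ℝ) (hw : w ≠ 0) (hMw : M *ᵥ w = 0)
    (v : Fin S → ℝ) (hv : M *ᵥ v = 0) : ∃ c : ℝ, v = c • w := by
  set φ := Matrix.toLin' M with hφ
  have hφapp : ∀ u : Fin S → ℝ, φ u = M *ᵥ u := fun u => Matrix.toLin'_apply M u
  have hker_le : LinearMap.ker φ ≤ Module.End.maxGenEigenspace φ 0 := by
    intro x hx
    rw [Module.End.mem_maxGenEigenspace]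
    refine ⟨1, ?_⟩
    simpa using LinearMap.mem_ker.mp hx
  have hfin : finrank ℝ (LinearMap.ker φ) ≤ 1 := by
    have h1 := LinearMap.finrank_maxGenEigenspace_zero_eq φ
    rw [aux_charpoly_toLin', hdeg] at h1
    calc finrank ℝ (LinearMap.ker φ) ≤ finrank ℝ (Module.End.maxGenEigenspace φ 0) :=
          Submodule.finrank_mono hker_le
      _ = 1 := h1
  have hwker : w ∈ LinearMap.ker φ := by rw [LinearMap.mem_ker, hφapp, hMw]
  have hle : (ℝ ∙ w) ≤ LinearMap.ker φ :=
    (Submodule.span_singleton_le_iff_mem _ _).2 hwker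
  have hspan2 : (ℝ ∙ w) = LinearMap.ker φ := by
    apply Submodule.eq_of_le_of_finrank_le hle
    rw [finrank_span_singleton hw]
    exact hfin
  have hvmem : v ∈ (ℝ ∙ w) := by
    rw [hspan2, LinearMap.mem_ker, hφapp, hv]
  rcases Submodule.mem_span_singleton.1 hvmem with ⟨c, hc⟩
  exact ⟨c, hc.symm⟩

/-- determinant formula for the stationary reward: if the eigenvalue `1`
of the row-stochastic matrix `P` has algebraic multiplicity one and `σ` is its unique
stationary distribution, then `det A₁ ≠ 0` and `σ·r = det A_r / det A₁`, where `A_r`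
(resp. `A₁`) is `P - I` with its last column replaced by `r` (resp. the all-ones
vector). -/
theorem stmt15 {S : ℕ} (hS : 0 < S) (P : Matrix (Fin S) (Fin S) ℝ)
    (hnn : ∀ i j, 0 ≤ P i j) (hrow : ∀ i, ∑ j, P i j = 1)
    (hmult : (Matrix.charpoly P).rootMultiplicity 1 = 1)
    (σ : Fin S → ℝ) (hσnn : ∀ i, 0 ≤ σ i) (hσsum : ∑ i, σ i = 1)
    (hσP : Matrix.vecMul σ P = σ)
    (r : Fin S → ℝ) :
    (lastColReplaced P (fun _ => 1)).det ≠ 0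
    ∧ σ ⬝ᵥ r = (lastColReplaced P r).det / (lastColReplaced P (fun _ => 1)).det := by
  classical
  set B : Matrix (Fin S) (Fin S) ℝ := P - 1 with hB
  set l : Fin S := ⟨S - 1, Nat.sub_lt hS Nat.one_pos⟩ with hl
  -- lastColReplaced is updateColumn of B
  have hLCR : ∀ c : Fin S → ℝ, lastColReplaced P c = B.updateCol l c := by
    intro c
    ext i j
    rw [lastColReplaced, Matrix.of_apply, Matrix.updateCol_apply]
    have : ((j : ℕ) = S - 1) ↔ (j = l) := by
      rw [Fin.ext_iff]
    by_cases h : j = l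
    · rw [if_pos (this.2 h), if_pos h]
    · rw [if_neg (fun hh => h (this.1 hh)), if_neg h]
  -- ones vector
  have hones_ne : (fun _ : Fin S => (1:ℝ)) ≠ 0 := by
    intro h
    have := congrFun h ⟨0, hS⟩
    norm_num at this
  have hBones : B *ᵥ (fun _ => (1:ℝ)) = 0 := by
    ext i
    simp only [Matrix.mulVec, dotProduct, hB, Matrix.sub_apply, mul_one,
      Pi.zero_apply, sub_mul]
    rw [Finset.sum_sub_distrib, hrow i]
    have : ∑ j, (1 : Matrix (Fin S) (Fin S) ℝ) i j = 1 := by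
      simp [Matrix.one_apply]
    rw [this, sub_self]
  have hσB : σ ᵥ* B = 0 := by
    rw [hB, Matrix.vecMul_sub, hσP, Matrix.vecMul_one, sub_self]
  have hdetB : B.det = 0 := by
    rw [← Matrix.exists_mulVec_eq_zero_iff]
    exact ⟨_, hones_ne, hBones⟩
  -- trailing degree facts
  have htd : B.charpoly.natTrailingDegree = 1 := by
    rw [hB, aux_charpoly_sub_one, ← Polynomial.rootMultiplicity_eq_natTrailingDegree]
    exact hmult
  have htdT : (Bᵀ).charpoly.natTrailingDegree = 1 := by
    rw [aux_charpoly_transpose]; exact htd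
  -- kernel facts
  have hkerB : ∀ v, B *ᵥ v = 0 → ∃ c : ℝ, v = c • (fun _ : Fin S => (1:ℝ)) :=
    fun v hv => aux_ker_eq_span B htd _ hones_ne hBones v hv
  have hσ_ne : σ ≠ 0 := by
    intro h
    rw [h] at hσsum
    simp at hσsum
  have hσTB : Bᵀ *ᵥ σ = 0 := by
    rw [Matrix.mulVec_transpose, hσB]
  have hkerBT : ∀ v, Bᵀ *ᵥ v = 0 → ∃ c : ℝ, v = c • σ :=
    fun v hv => aux_ker_eq_span Bᵀ htdT σ hσ_ne hσTB v hv
  -- σ dot ones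
  have hσones : σ ⬝ᵥ (fun _ : Fin S => (1:ℝ)) = 1 := by
    simp only [dotProduct, mul_one]
    exact hσsum
  -- sum splitting helper
  have hsplit : ∀ (a g : Fin S → ℝ),
      ∑ j, (if j = l then a j else g j) = (∑ j, if j = l then 0 else g j) + a l := by
    intro a g
    have h1 : ∑ j, (if j = l then a j else g j)
        = (∑ j ∈ Finset.univ.erase l, (if j = l then a j else g j))
          + (if l = l then a l else g l) :=
      (Finset.sum_erase_add _ _ (Finset.mem_univ l)).symm
    have h2 : ∑ j, (if j = l then (0:ℝ) else g j)
        = (∑ j ∈ Finset.univ.erase l, (if j = l then (0:ℝ) else g j))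
          + (if l = l then (0:ℝ) else g l) :=
      (Finset.sum_erase_add _ _ (Finset.mem_univ l)).symm
    rw [h1, h2, if_pos rfl, if_pos rfl, add_zero]
    congr 1
    exact Finset.sum_congr rfl fun j hj => by
      rw [if_neg (Finset.ne_of_mem_erase hj), if_neg (Finset.ne_of_mem_erase hj)]
  -- A₁ has nonzero determinant
  have hdet1 : (lastColReplaced P (fun _ => 1)).det ≠ 0 := by
    intro h0
    rw [hLCR, ← Matrix.exists_mulVec_eq_zero_iff] at h0
    obtain ⟨v, hvne, hv0⟩ := h0
    set w : Fin S → ℝ := Function.update v l 0 with hw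
    have hkey : (B.updateCol l (fun _ => (1:ℝ))) *ᵥ v
        = B *ᵥ w + (v l) • (fun _ : Fin S => (1:ℝ)) := by
      ext i
      simp only [Matrix.mulVec, dotProduct, Matrix.updateCol_apply,
        Pi.add_apply, Pi.smul_apply, smul_eq_mul, mul_one]
      have lhs : ∑ j, (if j = l then (1:ℝ) else B i j) * v j
          = ∑ j, (if j = l then v j else B i j * v j) := by
        apply Finset.sum_congr rfl
        intro j _
        by_cases h : j = l
        · rw [if_pos h, if_pos h, one_mul]
        · rw [if_neg h, if_neg h]
      have rhs : ∑ j, B i j * w j = ∑ j, (if j = l then 0 else B i j * v j) := by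
        apply Finset.sum_congr rfl
        intro j _
        by_cases h : j = l
        · rw [if_pos h, h, hw, Function.update_self, mul_zero]
        · rw [if_neg h, hw, Function.update_of_ne h]
      rw [lhs, rhs, hsplit (fun j => v j) (fun j => B i j * v j)]
    rw [hkey] at hv0
    have hdot := congrArg (fun u => σ ⬝ᵥ u) hv0
    simp only [dotProduct_add, dotProduct_smul, Matrix.dotProduct_mulVec,
      hσB, zero_dotProduct, hσones, smul_eq_mul, mul_one, zero_add,
      dotProduct_zero] at hdot
    -- hdot : v l = 0
    rw [hdot, zero_smul, add_zero] at hv0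
    obtain ⟨c, hc⟩ := hkerB w hv0
    have hwl : w l = 0 := by rw [hw, Function.update_self]
    have hc0 : c = 0 := by
      have := congrFun hc l
      rw [hwl] at this
      simpa using this.symm
    have hw0 : w = 0 := by rw [hc, hc0, zero_smul]
    apply hvne
    ext j
    by_cases h : j = l
    · rw [h, hdot]; rfl
    · have := congrFun hw0 j
      rw [hw, Function.update_of_ne h] at this
      exact this
  -- the determinant as a dot product with the adjugate row
  set d : Fin S → ℝ := B.adjugate l with hd
  have hdetc : ∀ c : Fin S → ℝ, (lastColReplaced P c).det = d ⬝ᵥ c := by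
    intro c
    rw [hLCR c, ← Matrix.cramer_apply, Matrix.cramer_eq_adjugate_mulVec]
    rfl
  -- d is a left null vector of B
  have hadjB : B.adjugate * B = 0 := by
    rw [Matrix.adjugate_mul, hdetB, zero_smul]
  have hdB : d ᵥ* B = 0 := by
    ext j
    have := congrFun (congrFun hadjB l) j
    simpa [Matrix.mul_apply, Matrix.vecMul, dotProduct, hd] using this
  have hdT : Bᵀ *ᵥ d = 0 := by rw [Matrix.mulVec_transpose, hdB]
  obtain ⟨t, ht⟩ := hkerBT d hdT
  -- compute the two determinants
  have hdet1' : (lastColReplaced P (fun _ => 1)).det = t := by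
    rw [hdetc, ht]
    simp only [smul_dotProduct, hσones, smul_eq_mul, mul_one]
  have hdetr : (lastColReplaced P r).det = t * (σ ⬝ᵥ r) := by
    rw [hdetc, ht]
    simp [smul_dotProduct]
  have ht_ne : t ≠ 0 := by rw [← hdet1']; exact hdet1
  refine ⟨hdet1, ?_⟩
  rw [hdetr, hdet1', mul_comm, mul_div_assoc, div_self ht_ne, mul_one]
end
end
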